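/- Let L ≥ 0, K ⊆ ℝ^d compact, and let f_n be a sequence in W^L(K) with C := liminf_{n→∞} ‖f_n‖_{W^L(K)} < ∞. Then there exist f ∈ W^L(K) with ‖f‖_{W^L(K)} ≤ C and a subsequence f_{n_k} such that f_{n_k} → f strongly in C^{0,α}(K) for every α < 1. -/

import Mathlib

open MeasureTheory Set Filter Topology
open scoped ENNReal NNReal Classical

noncomputable section

/-- The rectified linear unit. -/
def relu (z : ℝ) : ℝ := max z 0

/-- The Borel σ-algebra on `C(K, ℝ)` for the topology of uniform convergence
(= compact-open topology for compact `K`). -/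
instance ctsMeasurableSpace {d : ℕ} (K : Set (Fin d → ℝ)) : MeasurableSpace C(K, ℝ) := borel _

/-- `(μp, μn)` is a (Jordan-decomposed) signed-measure representation of `f` over the
class `H ⊆ C(K, ℝ)`: both parts are finite measures concentrated on `H`, and
`f x = ∫ relu (g x) dμp - ∫ relu (g x) dμn` for every `x ∈ K`. -/
def IsBarronRep {d : ℕ} (K : Set (Fin d → ℝ)) (H : Set C(K, ℝ)) (f : C(K, ℝ))
    (μp μn : Measure C(K, ℝ)) : Prop :=
  IsFiniteMeasure μp ∧ IsFiniteMeasure μn ∧ μp Hᶜ = 0 ∧ μn Hᶜ = 0 ∧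
    ∀ x : K, f x = (∫ g : C(K, ℝ), relu (g x) ∂μp) - ∫ g : C(K, ℝ), relu (g x) ∂μn

/-- The generalized Barron norm `‖f‖_{X,K}`, where `H` plays the role of the closed unit
ball `B^X` (realized inside `C(K,ℝ)`): the infimum of the total variation mass over all
signed-measure representations of `f`. -/
def barronNorm {d : ℕ} (K : Set (Fin d → ℝ)) (H : Set C(K, ℝ)) (f : C(K, ℝ)) : ℝ≥0∞ :=
  ⨅ p : {p : Measure C(K, ℝ) × Measure C(K, ℝ) // IsBarronRep K H f p.1 p.2},
    p.1.1 Set.univ + p.1.2 Set.univ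

/-- The neural tree norm `‖·‖_{W^L(K)}`. For `L = 0` it is the norm `‖w‖_{ℓ¹} + |b|` of the
space of affine functions `x ↦ wᵀx + b`; for `L ≥ 1`, `W^L(K) = B_{W^{L-1}(K), K}` is the
generalized Barron space modelled on `X = W^{L-1}(K)`, whose unit ball is
`{g : treeNorm K (L-1) g ≤ 1}`.  A continuous function `f` belongs to `W^L(K)` iff
`treeNorm K L f ≠ ∞`. -/
def treeNorm {d : ℕ} (K : Set (Fin d → ℝ)) : ℕ → C(K, ℝ) → ℝ≥0∞
  | 0, f =>
    ⨅ p : {p : (Fin d → ℝ) × ℝ //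
        ∀ x : K, f x = (∑ i : Fin d, p.1 i * (x : Fin d → ℝ) i) + p.2},
      ENNReal.ofReal ((∑ i : Fin d, |p.1.1 i|) + |p.1.2|)
  | (L + 1), f => barronNorm K {g : C(K, ℝ) | treeNorm K L g ≤ 1} f

/-- The Hölder norm `‖u‖_{C^{0,α}(K)} = ‖u‖_{C⁰(K)} + [u]_{C^{0,α}(K)}` (valued in `ℝ≥0∞`),
for functions on `K ⊆ ℝ^d` with the `ℓ∞` norm on `ℝ^d`. -/
def holderNorm {d : ℕ} (K : Set (Fin d → ℝ)) (α : ℝ) (u : K → ℝ) : ℝ≥0∞ :=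
  (⨆ x : K, (‖u x‖₊ : ℝ≥0∞)) +
    ⨆ x : K, ⨆ y : K, if x = y then 0 else (‖u x - u y‖₊ : ℝ≥0∞) / edist x y ^ α

end
section Sec1
open ENNReal

lemma relu_nonneg (a : ℝ) : 0 ≤ relu a := le_max_right _ _
lemma relu_le_abs (a : ℝ) : relu a ≤ |a| := max_le (le_abs_self a) (abs_nonneg a)
lemma abs_relu_le_abs (a : ℝ) : |relu a| ≤ |a| := by
  rw [abs_of_nonneg (relu_nonneg a)]; exact relu_le_abs a
lemma relu_lip (a b : ℝ) : |relu a - relu b| ≤ |a - b| := by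
  unfold relu
  rcases le_total a b with h | h <;> rcases le_total a 0 with ha | ha <;>
    rcases le_total b 0 with hb | hb <;>
    simp [max_eq_left, max_eq_right, ha, hb, abs_le] <;> constructor <;> linarith [abs_nonneg (a-b), le_abs_self (a-b), neg_abs_le (a-b)]
lemma continuous_relu : Continuous relu := continuous_id.max continuous_const

end Sec1
section Sec2
open ENNReal

lemma le_iInf_mul_of {ι : Sort*} {a : ℝ≥0∞} {f : ι → ℝ≥0∞} {e : ℝ≥0∞} (he0 : e ≠ 0)
    (het : e ≠ ⊤) (h : ∀ i, a ≤ f i * e) : a ≤ (⨅ i, f i) * e := by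
  rcases isEmpty_or_nonempty ι with hι | hι
  · rw [iInf_of_empty, ENNReal.top_mul he0]; exact le_top
  · have h2 : a / e ≤ ⨅ i, f i :=
      le_iInf fun i => ENNReal.div_le_of_le_mul (h i)
    calc a = a / e * e := (ENNReal.div_mul_cancel he0 het).symm
    _ ≤ (⨅ i, f i) * e := mul_le_mul_left h2 e

lemma coeK_dist {d : ℕ} {K : Set (Fin d → ℝ)} (x y : K) (i : Fin d) :
    |(x : Fin d → ℝ) i - (y : Fin d → ℝ) i| ≤ dist x y := by
  rw [Subtype.dist_eq]
  exact (Real.dist_eq _ _) ▸ dist_le_pi_dist (x : Fin d → ℝ) (y : Fin d → ℝ) i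

lemma treeNorm_est {d : ℕ} {K : Set (Fin d → ℝ)} {R : ℝ} (hR : 1 ≤ R)
    (hKR : ∀ (x : K) (i : Fin d), |(x : Fin d → ℝ) i| ≤ R) (L : ℕ) :
    ∀ f : C(K, ℝ), (∀ x : K, (‖f x‖₊ : ℝ≥0∞) ≤ treeNorm K L f * ENNReal.ofReal R)
      ∧ ∀ x y : K, (‖f x - f y‖₊ : ℝ≥0∞) ≤ treeNorm K L f * edist x y := by
  have hR0 : (0:ℝ) < R := lt_of_lt_of_le one_pos hR
  have hRne : ENNReal.ofReal R ≠ 0 := by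
    simp [ENNReal.ofReal_eq_zero]; linarith
  induction L with
  | zero =>
    intro f
    constructor
    · intro x
      show _ ≤ (⨅ p : {p : (Fin d → ℝ) × ℝ //
        ∀ x : K, f x = (∑ i : Fin d, p.1 i * (x : Fin d → ℝ) i) + p.2},
        ENNReal.ofReal ((∑ i : Fin d, |p.1.1 i|) + |p.1.2|)) * ENNReal.ofReal R
      refine le_iInf_mul_of hRne ENNReal.ofReal_ne_top fun p => ?_
      obtain ⟨⟨w, b⟩, hp⟩ := p
      have habs : |f x| ≤ ((∑ i : Fin d, |w i|) + |b|) * R := by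
        rw [hp x]
        calc |(∑ i : Fin d, w i * (x : Fin d → ℝ) i) + b|
            ≤ |∑ i : Fin d, w i * (x : Fin d → ℝ) i| + |b| := abs_add_le _ _
          _ ≤ (∑ i : Fin d, |w i * (x : Fin d → ℝ) i|) + |b| := by
              gcongr; exact Finset.abs_sum_le_sum_abs _ _
          _ ≤ (∑ i : Fin d, |w i| * R) + |b| * R := by
              gcongr with i _
              · rw [abs_mul]; exact mul_le_mul_of_nonneg_left (hKR x i) (abs_nonneg _)
              · nlinarith [abs_nonneg b]
          _ = ((∑ i : Fin d, |w i|) + |b|) * R := by rw [← Finset.sum_mul]; ring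
      calc (‖f x‖₊ : ℝ≥0∞) = ENNReal.ofReal |f x| := by
            rw [← enorm_eq_nnnorm, ← ofReal_norm, Real.norm_eq_abs]
        _ ≤ ENNReal.ofReal (((∑ i : Fin d, |w i|) + |b|) * R) := ENNReal.ofReal_le_ofReal habs
        _ = ENNReal.ofReal ((∑ i : Fin d, |w i|) + |b|) * ENNReal.ofReal R := by
            rw [ENNReal.ofReal_mul]
            positivity
    · intro x y
      rcases eq_or_ne x y with rfl | hxy
      · simp
      have he0 : edist x y ≠ 0 := by simpa using hxy
      have het : edist x y ≠ ⊤ := edist_ne_top x y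
      show _ ≤ (⨅ p : {p : (Fin d → ℝ) × ℝ //
        ∀ x : K, f x = (∑ i : Fin d, p.1 i * (x : Fin d → ℝ) i) + p.2},
        ENNReal.ofReal ((∑ i : Fin d, |p.1.1 i|) + |p.1.2|)) * edist x y
      refine le_iInf_mul_of he0 het fun p => ?_
      obtain ⟨⟨w, b⟩, hp⟩ := p
      have habs : |f x - f y| ≤ ((∑ i : Fin d, |w i|) + |b|) * dist x y := by
        rw [hp x, hp y]
        have : ((∑ i : Fin d, w i * (x : Fin d → ℝ) i) + b)
            - ((∑ i : Fin d, w i * (y : Fin d → ℝ) i) + b)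
            = ∑ i : Fin d, w i * ((x : Fin d → ℝ) i - (y : Fin d → ℝ) i) := by
          rw [Finset.sum_congr rfl (fun i _ => mul_sub (w i) _ _), Finset.sum_sub_distrib]
          ring
        rw [this]
        calc |∑ i : Fin d, w i * ((x : Fin d → ℝ) i - (y : Fin d → ℝ) i)|
            ≤ ∑ i : Fin d, |w i * ((x : Fin d → ℝ) i - (y : Fin d → ℝ) i)| :=
              Finset.abs_sum_le_sum_abs _ _
          _ ≤ ∑ i : Fin d, |w i| * dist x y := by
              gcongr with i _
              rw [abs_mul]
              exact mul_le_mul_of_nonneg_left (coeK_dist x y i) (abs_nonneg _)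
          _ = (∑ i : Fin d, |w i|) * dist x y := by rw [Finset.sum_mul]
          _ ≤ ((∑ i : Fin d, |w i|) + |b|) * dist x y := by
              have : (0:ℝ) ≤ dist x y := dist_nonneg
              nlinarith [abs_nonneg b]
      calc (‖f x - f y‖₊ : ℝ≥0∞) = ENNReal.ofReal |f x - f y| := by
            rw [← enorm_eq_nnnorm, ← ofReal_norm, Real.norm_eq_abs]
        _ ≤ ENNReal.ofReal (((∑ i : Fin d, |w i|) + |b|) * dist x y) :=
            ENNReal.ofReal_le_ofReal habs
        _ = ENNReal.ofReal ((∑ i : Fin d, |w i|) + |b|) * edist x y := by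
            rw [ENNReal.ofReal_mul, edist_dist]
            positivity
  | succ L ih =>
    intro f
    haveI : BorelSpace C(↥K, ℝ) := ⟨rfl⟩
    have hbd : ∀ g : C(K, ℝ), treeNorm K L g ≤ 1 → ∀ x : K, |g x| ≤ R := by
      intro g hg x
      have h1 := (ih g).1 x
      have h2 : (‖g x‖₊ : ℝ≥0∞) ≤ ENNReal.ofReal R := by
        refine le_trans h1 ?_
        calc treeNorm K L g * ENNReal.ofReal R ≤ 1 * ENNReal.ofReal R :=
              mul_le_mul_left hg _
          _ = ENNReal.ofReal R := one_mul _
      rw [← enorm_eq_nnnorm, ← ofReal_norm, Real.norm_eq_abs] at h2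
      exact (ENNReal.ofReal_le_ofReal_iff hR0.le).mp h2
    have hlip : ∀ g : C(K, ℝ), treeNorm K L g ≤ 1 → ∀ x y : K, |g x - g y| ≤ dist x y := by
      intro g hg x y
      have h1 := (ih g).2 x y
      have h2 : (‖g x - g y‖₊ : ℝ≥0∞) ≤ ENNReal.ofReal (dist x y) := by
        refine le_trans h1 ?_
        rw [← edist_dist]
        calc treeNorm K L g * edist x y ≤ 1 * edist x y := mul_le_mul_left hg _
          _ = edist x y := one_mul _
      rw [← enorm_eq_nnnorm, ← ofReal_norm, Real.norm_eq_abs] at h2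
      exact (ENNReal.ofReal_le_ofReal_iff dist_nonneg).mp h2
    have key : ∀ (p : {p : Measure C(K, ℝ) × Measure C(K, ℝ) //
        IsBarronRep K {g : C(K, ℝ) | treeNorm K L g ≤ 1} f p.1 p.2}),
        (∀ x : K, |f x| ≤ (p.1.1 Set.univ + p.1.2 Set.univ).toReal * R)
        ∧ (∀ x y : K, |f x - f y| ≤ (p.1.1 Set.univ + p.1.2 Set.univ).toReal * dist x y) := by
      rintro ⟨⟨μp, μn⟩, hfp, hfn, hp0, hn0, heq⟩
      haveI := hfp; haveI := hfn
      have compl_eq : {g : C(K, ℝ) | treeNorm K L g ≤ 1}ᶜ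
          = {g : C(K, ℝ) | ¬ treeNorm K L g ≤ 1} := rfl
      have aeHp : ∀ᵐ g ∂μp, treeNorm K L g ≤ 1 := ae_iff.mpr (compl_eq ▸ hp0)
      have aeHn : ∀ᵐ g ∂μn, treeNorm K L g ≤ 1 := ae_iff.mpr (compl_eq ▸ hn0)
      have meas : ∀ (μ : Measure C(K, ℝ)) (x : K),
          AEStronglyMeasurable (fun g : C(K, ℝ) => relu (g x)) μ := fun μ x =>
        (continuous_relu.comp (continuous_eval_const x)).aestronglyMeasurable
      have int : ∀ (μ : Measure C(K, ℝ)) [IsFiniteMeasure μ],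
          (∀ᵐ g ∂μ, treeNorm K L g ≤ 1) → ∀ x : K,
          Integrable (fun g : C(K, ℝ) => relu (g x)) μ := by
        intro μ _ hae x
        refine Integrable.mono' (integrable_const R) (meas μ x) ?_
        filter_upwards [hae] with g hg
        rw [Real.norm_eq_abs]
        exact le_trans (abs_relu_le_abs _) (hbd g hg x)
      have mass_ne : (μp Set.univ + μn Set.univ) ≠ ⊤ :=
        ENNReal.add_ne_top.mpr ⟨measure_ne_top μp _, measure_ne_top μn _⟩
      have mass_toReal : (μp Set.univ + μn Set.univ).toReal
          = (μp Set.univ).toReal + (μn Set.univ).toReal :=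
        ENNReal.toReal_add (measure_ne_top μp _) (measure_ne_top μn _)
      constructor
      · intro x
        have h1 : ‖∫ g : C(K, ℝ), relu (g x) ∂μp‖ ≤ R * (μp Set.univ).toReal := by
          refine norm_integral_le_of_norm_le_const ?_
          filter_upwards [aeHp] with g hg
          rw [Real.norm_eq_abs]
          exact le_trans (abs_relu_le_abs _) (hbd g hg x)
        have h2 : ‖∫ g : C(K, ℝ), relu (g x) ∂μn‖ ≤ R * (μn Set.univ).toReal := by
          refine norm_integral_le_of_norm_le_const ?_
          filter_upwards [aeHn] with g hg
          rw [Real.norm_eq_abs]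
          exact le_trans (abs_relu_le_abs _) (hbd g hg x)
        rw [heq x]
        calc |(∫ g : C(K, ℝ), relu (g x) ∂μp) - ∫ g : C(K, ℝ), relu (g x) ∂μn|
            ≤ ‖∫ g : C(K, ℝ), relu (g x) ∂μp‖ + ‖∫ g : C(K, ℝ), relu (g x) ∂μn‖ := by
              rw [← Real.norm_eq_abs]; exact norm_sub_le _ _
          _ ≤ R * (μp Set.univ).toReal + R * (μn Set.univ).toReal := add_le_add h1 h2
          _ = (μp Set.univ + μn Set.univ).toReal * R := by rw [mass_toReal]; ring
      · intro x y
        have hfd : f x - f y = (∫ g : C(K, ℝ), (relu (g x) - relu (g y)) ∂μp)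
            - ∫ g : C(K, ℝ), (relu (g x) - relu (g y)) ∂μn := by
          rw [heq x, heq y, integral_sub (int μp aeHp x) (int μp aeHp y),
            integral_sub (int μn aeHn x) (int μn aeHn y)]
          ring
        have h1 : ‖∫ g : C(K, ℝ), (relu (g x) - relu (g y)) ∂μp‖
            ≤ dist x y * (μp Set.univ).toReal := by
          refine norm_integral_le_of_norm_le_const ?_
          filter_upwards [aeHp] with g hg
          rw [Real.norm_eq_abs]
          exact le_trans (relu_lip _ _) (hlip g hg x y)
        have h2 : ‖∫ g : C(K, ℝ), (relu (g x) - relu (g y)) ∂μn‖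
            ≤ dist x y * (μn Set.univ).toReal := by
          refine norm_integral_le_of_norm_le_const ?_
          filter_upwards [aeHn] with g hg
          rw [Real.norm_eq_abs]
          exact le_trans (relu_lip _ _) (hlip g hg x y)
        rw [hfd]
        calc |(∫ g : C(K, ℝ), (relu (g x) - relu (g y)) ∂μp)
            - ∫ g : C(K, ℝ), (relu (g x) - relu (g y)) ∂μn|
            ≤ ‖∫ g : C(K, ℝ), (relu (g x) - relu (g y)) ∂μp‖
              + ‖∫ g : C(K, ℝ), (relu (g x) - relu (g y)) ∂μn‖ := by
              rw [← Real.norm_eq_abs]; exact norm_sub_le _ _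
          _ ≤ dist x y * (μp Set.univ).toReal + dist x y * (μn Set.univ).toReal :=
              add_le_add h1 h2
          _ = (μp Set.univ + μn Set.univ).toReal * dist x y := by rw [mass_toReal]; ring
    have unfold1 : treeNorm K (L + 1) f = ⨅ p : {p : Measure C(K, ℝ) × Measure C(K, ℝ) //
        IsBarronRep K {g : C(K, ℝ) | treeNorm K L g ≤ 1} f p.1 p.2},
        p.1.1 Set.univ + p.1.2 Set.univ := rfl
    constructor
    · intro x
      rw [unfold1]
      refine le_iInf_mul_of hRne ENNReal.ofReal_ne_top fun p => ?_
      have hmass := ENNReal.add_ne_top.mpr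
        ⟨@measure_ne_top _ _ p.1.1 p.2.1 Set.univ, @measure_ne_top _ _ p.1.2 p.2.2.1 Set.univ⟩
      calc (‖f x‖₊ : ℝ≥0∞) = ENNReal.ofReal |f x| := by
            rw [← enorm_eq_nnnorm, ← ofReal_norm, Real.norm_eq_abs]
        _ ≤ ENNReal.ofReal ((p.1.1 Set.univ + p.1.2 Set.univ).toReal * R) :=
            ENNReal.ofReal_le_ofReal ((key p).1 x)
        _ = (p.1.1 Set.univ + p.1.2 Set.univ) * ENNReal.ofReal R := by
            rw [ENNReal.ofReal_mul ENNReal.toReal_nonneg, ENNReal.ofReal_toReal hmass]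
    · intro x y
      rcases eq_or_ne x y with rfl | hxy
      · simp
      have he0 : edist x y ≠ 0 := by simpa using hxy
      have het : edist x y ≠ ⊤ := edist_ne_top x y
      rw [unfold1]
      refine le_iInf_mul_of he0 het fun p => ?_
      have hmass := ENNReal.add_ne_top.mpr
        ⟨@measure_ne_top _ _ p.1.1 p.2.1 Set.univ, @measure_ne_top _ _ p.1.2 p.2.2.1 Set.univ⟩
      calc (‖f x - f y‖₊ : ℝ≥0∞) = ENNReal.ofReal |f x - f y| := by
            rw [← enorm_eq_nnnorm, ← ofReal_norm, Real.norm_eq_abs]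
        _ ≤ ENNReal.ofReal ((p.1.1 Set.univ + p.1.2 Set.univ).toReal * dist x y) :=
            ENNReal.ofReal_le_ofReal ((key p).2 x y)
        _ = (p.1.1 Set.univ + p.1.2 Set.univ) * edist x y := by
            rw [ENNReal.ofReal_mul ENNReal.toReal_nonneg, ENNReal.ofReal_toReal hmass, edist_dist]

end Sec2
section RMK
open ENNReal TopologicalSpace

variable {Ω : Type*} [MetricSpace Ω] [CompactSpace Ω] [MeasurableSpace Ω] [BorelSpace Ω]

lemma cm_integrable (f : C(Ω, ℝ)) (μ : Measure Ω) [IsFiniteMeasure μ] :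
    MeasureTheory.Integrable (fun x => f x) μ := by
  refine MeasureTheory.Integrable.mono' (MeasureTheory.integrable_const ‖f‖)
    f.continuous.aestronglyMeasurable ?_
  exact Filter.Eventually.of_forall fun x => f.norm_coe_le_norm x

lemma min_sub_min_le (a s t : ℝ) (hst : s ≤ t) : min a t - min a s ≤ t - s := by
  rcases le_total a s with h | h <;> rcases le_total a t with h' | h' <;>
    simp [min_eq_left, min_eq_right, h, h'] <;> linarith

theorem riesz_rep (Λ : C(Ω, ℝ) → ℝ) (hadd : ∀ f g, Λ (f + g) = Λ f + Λ g)
    (hsmul : ∀ (c : ℝ) f, Λ (c • f) = c * Λ f)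
    (hpos : ∀ f, (∀ x, 0 ≤ f x) → 0 ≤ Λ f) :
    ∃ μ : Measure Ω, IsFiniteMeasure μ ∧ ∀ h : C(Ω, ℝ), ∫ x, h x ∂μ = Λ h := by
  -- monotonicity of Λ
  have hmono : ∀ f g : C(Ω, ℝ), (∀ x, f x ≤ g x) → Λ f ≤ Λ g := by
    intro f g hfg
    have h1 : Λ (g - f) + Λ f = Λ g := by
      rw [← hadd]; congr 1; ext x; simp
    have h2 : 0 ≤ Λ (g - f) := hpos _ fun x => by simp [sub_nonneg, hfg x]
    linarith
  have hzero : Λ 0 = 0 := by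
    have := hsmul 0 0
    simpa using this
  -- the admissible sets
  set Adm : Set Ω → Set ℝ := fun s =>
    {r : ℝ | ∃ f : C(Ω, ℝ), (∀ x, 0 ≤ f x) ∧ (∀ x ∈ s, 1 ≤ f x) ∧ r = Λ f} with hAdm
  have hbdd : ∀ s, BddBelow (Adm s) := by
    rintro s
    refine ⟨0, ?_⟩
    rintro r ⟨f, hf0, _, rfl⟩
    exact hpos f hf0
  have hne : ∀ s, (Adm s).Nonempty := by
    intro s
    exact ⟨Λ 1, 1, fun x => zero_le_one, fun x _ => le_refl 1, rfl⟩
  set lam : Set Ω → ℝ := fun s => sInf (Adm s) with hlam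
  have lam_nonneg : ∀ s, 0 ≤ lam s := fun s =>
    le_csInf (hne s) (by rintro r ⟨f, hf0, _, rfl⟩; exact hpos f hf0)
  have lam_le : ∀ (s : Set Ω) (f : C(Ω, ℝ)), (∀ x, 0 ≤ f x) → (∀ x ∈ s, 1 ≤ f x) →
      lam s ≤ Λ f := fun s f h0 h1 => csInf_le (hbdd s) ⟨f, h0, h1, rfl⟩
  have lam_mono : ∀ s t : Set Ω, s ⊆ t → lam s ≤ lam t := by
    intro s t hst
    refine csInf_le_csInf (hbdd s) (hne t) ?_
    rintro r ⟨f, h0, h1, rfl⟩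
    exact ⟨f, h0, fun x hx => h1 x (hst hx), rfl⟩
  have le_lam : ∀ (s : Set Ω) (h : C(Ω, ℝ)), (∀ x, 0 ≤ h x) → (∀ x ∉ s, h x = 0) →
      (∀ x, h x ≤ 1) → Λ h ≤ lam s := by
    intro s h h0 hs h1
    refine le_csInf (hne s) ?_
    rintro r ⟨f, hf0, hf1, rfl⟩
    refine hmono _ _ fun x => ?_
    by_cases hx : x ∈ s
    · exact le_trans (h1 x) (hf1 x hx)
    · rw [hs x hx]; exact hf0 x
  -- subadditivity
  have lam_subadd : ∀ s t : Set Ω, lam (s ∪ t) ≤ lam s + lam t := by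
    intro s t
    refine le_of_forall_pos_le_add fun ε hε => ?_
    obtain ⟨r1, hr1, hr1'⟩ := Real.lt_sInf_add_pos (hne s) (half_pos hε)
    obtain ⟨r2, hr2, hr2'⟩ := Real.lt_sInf_add_pos (hne t) (half_pos hε)
    obtain ⟨f1, hf10, hf11, rfl⟩ := hr1
    obtain ⟨f2, hf20, hf21, rfl⟩ := hr2
    have hmem : lam (s ∪ t) ≤ Λ (f1 + f2) := by
      refine lam_le _ _ (fun x => by
        rw [ContinuousMap.add_apply]; exact add_nonneg (hf10 x) (hf20 x)) ?_
      rintro x (hx | hx) <;> rw [ContinuousMap.add_apply]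
      · have := hf11 x hx; have := hf20 x; linarith
      · have := hf21 x hx; have := hf10 x; linarith
    rw [hadd] at hmem
    have := add_halves ε
    linarith
  -- additivity on disjoint compacts
  have lam_add : ∀ s t : Set Ω, IsClosed s → IsClosed t → Disjoint s t →
      lam s + lam t ≤ lam (s ∪ t) := by
    intro s t hs ht hdisj
    obtain ⟨φ, hφ0, hφ1, hφmem⟩ := exists_continuous_zero_one_of_isClosed ht hs hdisj.symm
    refine le_csInf (hne _) ?_
    rintro r ⟨f, hf0, hf1, rfl⟩
    have h1 : lam s ≤ Λ (f * φ) := by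
      refine lam_le _ _ (fun x => mul_nonneg (hf0 x) (hφmem x).1) fun x hx => ?_
      have : φ x = 1 := hφ1 hx
      rw [ContinuousMap.mul_apply, this, mul_one]
      exact hf1 x (Or.inl hx)
    have h2 : lam t ≤ Λ (f * (1 - φ)) := by
      refine lam_le _ _ (fun x => mul_nonneg (hf0 x) (by simpa using (hφmem x).2)) fun x hx => ?_
      have : φ x = 0 := hφ0 hx
      simp only [ContinuousMap.mul_apply, ContinuousMap.sub_apply, ContinuousMap.one_apply, this,
        sub_zero, mul_one]
      exact hf1 x (Or.inr hx)
    have h3 : Λ (f * φ) + Λ (f * (1 - φ)) = Λ f := by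
      rw [← hadd]; congr 1; ext x; simp; ring
    linarith
  -- the content
  set cont : MeasureTheory.Content Ω :=
    { toFun := fun k => (lam (k : Set Ω)).toNNReal
      mono' := fun k1 k2 h => Real.toNNReal_mono (lam_mono _ _ h)
      sup_disjoint' := by
        intro k1 k2 hdisj hc1 hc2
        have heq : lam ((k1 : Set Ω) ∪ (k2 : Set Ω)) = lam k1 + lam k2 :=
          le_antisymm (lam_subadd _ _) (lam_add _ _ hc1 hc2 hdisj)
        show (lam ((k1 : Set Ω) ∪ (k2 : Set Ω))).toNNReal = _
        rw [heq, Real.toNNReal_add (lam_nonneg _) (lam_nonneg _)]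
      sup_le' := fun k1 k2 =>
        le_trans (Real.toNNReal_mono (lam_subadd _ _))
          (le_of_eq (Real.toNNReal_add (lam_nonneg _) (lam_nonneg _))) } with hcont
  have cont_apply : ∀ k : TopologicalSpace.Compacts Ω,
      (cont k : ℝ≥0∞) = ENNReal.ofReal (lam (k : Set Ω)) := fun k => rfl
  set μ : Measure Ω := cont.measure with hμ
  -- μ of a compact set is at most lam
  have measure_compact_le : ∀ (k : Set Ω), IsCompact k → μ k ≤ ENNReal.ofReal (lam k) := by
    intro k hk
    refine ENNReal.le_of_forall_pos_le_add fun ε hε hlt => ?_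
    set δ : ℝ := (ε : ℝ) with hδ
    have hδ0 : 0 < δ := by exact_mod_cast hε
    obtain ⟨r, hr, hr'⟩ := Real.lt_sInf_add_pos (hne k) (half_pos hδ0)
    obtain ⟨f, hf0, hf1, rfl⟩ := hr
    set ε' : ℝ := (δ/2) / (lam k + δ) with hε'
    have hden : 0 < lam k + δ := by have := lam_nonneg k; linarith
    have hε'0 : 0 < ε' := by positivity
    have hε'1 : ε' < 1 := by
      rw [hε', div_lt_one hden]
      have := lam_nonneg k; linarith
    set U : Set Ω := {x | 1 - ε' < f x} with hU
    have hUopen : IsOpen U := isOpen_lt continuous_const f.continuous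
    have hkU : k ⊆ U := fun x hx => lt_of_lt_of_le (by linarith) (hf1 x hx)
    have h1e : (0:ℝ) < 1 - ε' := by linarith
    have hinner : ∀ k' : TopologicalSpace.Compacts Ω, (k' : Set Ω) ⊆ U →
        (cont k' : ℝ≥0∞) ≤ ENNReal.ofReal (Λ f / (1 - ε')) := by
      intro k' hk'
      rw [cont_apply]
      refine ENNReal.ofReal_le_ofReal ?_
      have hstep : lam (k' : Set Ω) ≤ Λ ((1 - ε')⁻¹ • f) := by
        refine lam_le _ _ (fun x => by
          rw [ContinuousMap.smul_apply, smul_eq_mul]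
          exact mul_nonneg (inv_nonneg.mpr h1e.le) (hf0 x)) fun x hx => ?_
        have hfx : 1 - ε' < f x := hk' hx
        rw [ContinuousMap.smul_apply, smul_eq_mul]
        calc (1:ℝ) = (1 - ε')⁻¹ * (1 - ε') := (inv_mul_cancel₀ h1e.ne').symm
          _ ≤ (1 - ε')⁻¹ * f x := mul_le_mul_of_nonneg_left hfx.le (inv_nonneg.mpr h1e.le)
      rw [hsmul] at hstep
      rw [div_eq_inv_mul]
      exact hstep
    have houter : μ k ≤ ENNReal.ofReal (Λ f / (1 - ε')) := by
      have hmk : μ k = cont.outerMeasure k :=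
        MeasureTheory.Content.measure_apply _ hk.isClosed.measurableSet
      rw [hmk]
      calc cont.outerMeasure k ≤ cont.outerMeasure U := measure_mono hkU
        _ = cont.innerContent ⟨U, hUopen⟩ := cont.outerMeasure_opens ⟨U, hUopen⟩
        _ ≤ ENNReal.ofReal (Λ f / (1 - ε')) := by
            refine iSup₂_le fun k' hk' => hinner k' hk'
    refine le_trans houter ?_
    have harith : Λ f / (1 - ε') ≤ lam k + δ := by
      rw [div_le_iff₀ h1e]
      have hεe : (lam k + δ) * (1 - ε') = lam k + δ / 2 := by
        rw [hε']; field_simp; ring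
      rw [hεe]
      linarith
    calc ENNReal.ofReal (Λ f / (1 - ε')) ≤ ENNReal.ofReal (lam k + δ) :=
          ENNReal.ofReal_le_ofReal harith
      _ = ENNReal.ofReal (lam k) + ENNReal.ofReal δ :=
          ENNReal.ofReal_add (lam_nonneg k) hδ0.le
      _ = ENNReal.ofReal (lam k) + ε := by rw [hδ, ENNReal.ofReal_coe_nnreal]
  -- open sets contain content of their compact subsets
  have measure_open_ge : ∀ (U : Set Ω) (hU : IsOpen U) (k : Set Ω), IsCompact k → k ⊆ U →
      ENNReal.ofReal (lam k) ≤ μ U := by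
    intro U hU k hk hkU
    have hmU : μ U = cont.outerMeasure U := MeasureTheory.Content.measure_apply _ hU.measurableSet
    rw [hmU, cont.outerMeasure_of_isOpen U hU]
    exact le_trans (le_of_eq (cont_apply ⟨k, hk⟩).symm)
      (cont.le_innerContent ⟨k, hk⟩ ⟨U, hU⟩ hkU)
  have hfinμ : IsFiniteMeasure μ := by
    constructor
    calc μ Set.univ ≤ ENNReal.ofReal (lam Set.univ) :=
          measure_compact_le Set.univ isCompact_univ
      _ < ⊤ := ENNReal.ofReal_lt_top
  haveI := hfinμ
  refine ⟨μ, hfinμ, ?_⟩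
  -- representation for nonnegative h
  have sum_range_shift2 : ∀ (c : ℕ → ℝ) (n : ℕ),
      ∑ i ∈ Finset.range (n + 2), c i = c 0 + c 1 + ∑ i ∈ Finset.range n, c (i + 2) := by
    intro c n
    induction n with
    | zero => simp [Finset.sum_range_succ]
    | succ n ih => rw [Finset.sum_range_succ, ih, Finset.sum_range_succ]; ring
  have Λ_sum : ∀ (n : ℕ) (F : ℕ → C(Ω, ℝ)),
      Λ (∑ i ∈ Finset.range n, F i) = ∑ i ∈ Finset.range n, Λ (F i) := by
    intro n F
    induction n with
    | zero => simpa using hzero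
    | succ n ih => rw [Finset.sum_range_succ, Finset.sum_range_succ, hadd, ih]
  have main_nonneg : ∀ h : C(Ω, ℝ), (∀ x, 0 ≤ h x) → ∫ x, h x ∂μ = Λ h := by
    intro h hh
    have key : ∀ Δ : ℝ, 0 < Δ →
        Λ h ≤ (∫ x, h x ∂μ) + 2 * Δ * lam Set.univ ∧
        (∫ x, h x ∂μ) ≤ Λ h + 2 * Δ * (μ Set.univ).toReal := by
      intro Δ hΔ
      set n : ℕ := ⌈‖h‖ / Δ⌉₊ with hn
      set N : ℕ := n + 2 with hN
      have hhN : ∀ x, h x ≤ N * Δ := by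
        intro x
        have h1 : ‖h‖ / Δ ≤ n := Nat.le_ceil _
        have h2 : h x ≤ ‖h‖ := le_trans (le_abs_self _) (by
          rw [← Real.norm_eq_abs]; exact h.norm_coe_le_norm x)
        have h3 : ‖h‖ ≤ n * Δ := by
          rw [div_le_iff₀ hΔ] at h1; linarith
        have h4 : (n : ℝ) * Δ ≤ N * Δ := by
          have : (n : ℝ) ≤ N := by exact_mod_cast Nat.le_add_right n 2
          nlinarith
        linarith
      set m : ℕ → C(Ω, ℝ) := fun i => ⟨fun x => min (h x) (i * Δ),
        h.continuous.min continuous_const⟩ with hm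
      set hi : ℕ → C(Ω, ℝ) := fun i => m (i + 1) - m i with hhi
      set S : ℕ → Set Ω := fun i => {x | (i : ℝ) * Δ ≤ h x} with hS
      have hScl : ∀ i, IsClosed (S i) := fun i =>
        isClosed_le continuous_const h.continuous
      have hScpt : ∀ i, IsCompact (S i) := fun i => (hScl i).isCompact
      have hS0 : S 0 = Set.univ := by
        ext x; simp [hS, hh x]
      have hSmono : ∀ i, S (i + 1) ⊆ S i := by
        intro i x hx
        simp only [hS, Set.mem_setOf_eq] at hx ⊢
        have : (i : ℝ) * Δ ≤ ((i : ℝ) + 1) * Δ := by nlinarith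
        push_cast at hx
        linarith
      have hSsub0 : ∀ i, S i ⊆ S 0 := by
        intro i
        rw [hS0]; exact Set.subset_univ _
      have hcast : ∀ i : ℕ, ((i : ℝ) + 1) = ((i + 1 : ℕ) : ℝ) := by intro i; push_cast; ring
      have hi_apply : ∀ i x, hi i x = min (h x) ((i + 1 : ℕ) * Δ) - min (h x) (i * Δ) := by
        intro i x; rfl
      have hi_nonneg : ∀ i x, 0 ≤ hi i x := by
        intro i x
        rw [hi_apply, sub_nonneg]
        refine min_le_min (le_refl _) ?_
        push_cast; nlinarith
      have hi_leΔ : ∀ i x, hi i x ≤ Δ := by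
        intro i x
        rw [hi_apply]
        have := min_sub_min_le (h x) ((i : ℝ) * Δ) (((i + 1 : ℕ) : ℝ) * Δ)
          (by push_cast; nlinarith)
        push_cast at this ⊢
        linarith
      have hi_eqΔ : ∀ i x, x ∈ S (i + 1) → hi i x = Δ := by
        intro i x hx
        simp only [hS, Set.mem_setOf_eq] at hx
        have hx' : (i : ℝ) * Δ ≤ h x := hSmono i hx
        rw [hi_apply, min_eq_right hx, min_eq_right hx']
        push_cast; ring
      have hi_eq0 : ∀ i x, x ∉ S i → hi i x = 0 := by
        intro i x hx
        simp only [hS, Set.mem_setOf_eq, not_le] at hx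
        have h1 : h x ≤ ((i + 1 : ℕ) : ℝ) * Δ := by push_cast; nlinarith
        rw [hi_apply, min_eq_left h1, min_eq_left hx.le, sub_self]
      have hi_sum : ∑ i ∈ Finset.range N, hi i = h := by
        ext x
        rw [ContinuousMap.sum_apply]
        have := Finset.sum_range_sub (fun i => m i x) N
        simp only [hhi, ContinuousMap.sub_apply]
        rw [this]
        have hm0 : m 0 x = 0 := by
          simp only [hm, ContinuousMap.coe_mk]
          rw [Nat.cast_zero, zero_mul]
          exact min_eq_right (hh x)
        have hmN : m N x = h x := by
          simp only [hm, ContinuousMap.coe_mk]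
          exact min_eq_left (hhN x)
        rw [hm0, hmN, sub_zero]
      have int_hi : ∀ i, MeasureTheory.Integrable (fun x => hi i x) μ := fun i =>
        cm_integrable (hi i) μ
      have int_sum : ∫ x, h x ∂μ = ∑ i ∈ Finset.range N, ∫ x, hi i x ∂μ := by
        conv_lhs => rw [← hi_sum]
        rw [← MeasureTheory.integral_finset_sum _ fun i _ => int_hi i]
        congr 1
        ext x
        rw [ContinuousMap.sum_apply]
      have lam_sum : Λ h = ∑ i ∈ Finset.range N, Λ (hi i) := by
        rw [← hi_sum, Λ_sum]
      -- the basic estimates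
      have e1 : ∀ i, Δ * lam (S (i + 1)) ≤ Λ (hi i) := by
        intro i
        have hle : lam (S (i + 1)) ≤ Λ (Δ⁻¹ • hi i) := by
          refine lam_le _ _ (fun x => by
            rw [ContinuousMap.smul_apply, smul_eq_mul]
            exact mul_nonneg (inv_nonneg.mpr hΔ.le) (hi_nonneg i x)) fun x hx => ?_
          rw [ContinuousMap.smul_apply, smul_eq_mul, hi_eqΔ i x hx,
            inv_mul_cancel₀ hΔ.ne']
        rw [hsmul] at hle
        calc Δ * lam (S (i + 1)) ≤ Δ * (Δ⁻¹ * Λ (hi i)) := by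
              have := mul_le_mul_of_nonneg_left hle hΔ.le
              exact this
          _ = Λ (hi i) := by field_simp
      have e2 : ∀ i, Λ (hi i) ≤ Δ * lam (S i) := by
        intro i
        have hle : ∀ r ∈ Adm (S i), Λ (hi i) ≤ Δ * r := by
          rintro r ⟨f, hf0, hf1, rfl⟩
          have hpt : ∀ x, hi i x ≤ (Δ • f) x := by
            intro x
            rw [ContinuousMap.smul_apply, smul_eq_mul]
            by_cases hx : x ∈ S i
            · exact le_trans (hi_leΔ i x) (by nlinarith [hf1 x hx])
            · rw [hi_eq0 i x hx]; exact mul_nonneg hΔ.le (hf0 x)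
          calc Λ (hi i) ≤ Λ (Δ • f) := hmono _ _ hpt
            _ = Δ * Λ f := hsmul _ _
        have : Λ (hi i) / Δ ≤ lam (S i) := by
          refine le_csInf (hne _) fun r hr => ?_
          rw [div_le_iff₀ hΔ]
          have := hle r hr
          linarith
        calc Λ (hi i) = Δ * (Λ (hi i) / Δ) := by field_simp
          _ ≤ Δ * lam (S i) := mul_le_mul_of_nonneg_left this hΔ.le
      have e3 : ∀ i, Δ * (μ (S (i + 1))).toReal ≤ ∫ x, hi i x ∂μ := by
        intro i
        have hpt : ∀ x, (S (i + 1)).indicator (fun _ => Δ) x ≤ hi i x := by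
          intro x
          by_cases hx : x ∈ S (i + 1)
          · rw [Set.indicator_of_mem hx, hi_eqΔ i x hx]
          · rw [Set.indicator_of_notMem hx]; exact hi_nonneg i x
        have hint : MeasureTheory.Integrable ((S (i + 1)).indicator (fun _ => Δ)) μ :=
          (MeasureTheory.integrable_const Δ).indicator (hScl (i + 1)).measurableSet
        calc Δ * (μ (S (i + 1))).toReal
            = ∫ x, (S (i + 1)).indicator (fun _ => Δ) x ∂μ := by
              rw [MeasureTheory.integral_indicator_const Δ (hScl (i + 1)).measurableSet,
                smul_eq_mul, measureReal_def]; ring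
          _ ≤ ∫ x, hi i x ∂μ := MeasureTheory.integral_mono hint (int_hi i) hpt
      have e4 : ∀ i, ∫ x, hi i x ∂μ ≤ Δ * (μ (S i)).toReal := by
        intro i
        have hpt : ∀ x, hi i x ≤ (S i).indicator (fun _ => Δ) x := by
          intro x
          by_cases hx : x ∈ S i
          · rw [Set.indicator_of_mem hx]; exact hi_leΔ i x
          · rw [Set.indicator_of_notMem hx, hi_eq0 i x hx]
        have hint : MeasureTheory.Integrable ((S i).indicator (fun _ => Δ)) μ :=
          (MeasureTheory.integrable_const Δ).indicator (hScl i).measurableSet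
        calc ∫ x, hi i x ∂μ ≤ ∫ x, (S i).indicator (fun _ => Δ) x ∂μ :=
              MeasureTheory.integral_mono (int_hi i) hint hpt
          _ = Δ * (μ (S i)).toReal := by
              rw [MeasureTheory.integral_indicator_const Δ (hScl i).measurableSet,
                smul_eq_mul, measureReal_def]; ring
      have e5 : ∀ i, (μ (S i)).toReal ≤ lam (S i) := by
        intro i
        have := measure_compact_le (S i) (hScpt i)
        calc (μ (S i)).toReal ≤ (ENNReal.ofReal (lam (S i))).toReal :=
              ENNReal.toReal_mono ENNReal.ofReal_ne_top this
          _ = lam (S i) := ENNReal.toReal_ofReal (lam_nonneg _)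
      have e6 : ∀ i, lam (S (i + 1)) ≤ (μ (S i)).toReal := by
        intro i
        set U : Set Ω := {x | (i : ℝ) * Δ < h x} with hU
        have hUopen : IsOpen U := isOpen_lt continuous_const h.continuous
        have hsub : S (i + 1) ⊆ U := by
          intro x hx
          simp only [hS, Set.mem_setOf_eq] at hx
          simp only [hU, Set.mem_setOf_eq]
          push_cast at hx
          nlinarith
        have hUS : U ⊆ S i := by
          intro x hx
          simp only [hU, Set.mem_setOf_eq] at hx
          simp only [hS, Set.mem_setOf_eq]
          exact le_of_lt hx
        have h1 : ENNReal.ofReal (lam (S (i + 1))) ≤ μ (S i) :=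
          le_trans (measure_open_ge U hUopen _ (hScpt (i + 1)) hsub) (measure_mono hUS)
        calc lam (S (i + 1)) = (ENNReal.ofReal (lam (S (i + 1)))).toReal :=
              (ENNReal.toReal_ofReal (lam_nonneg _)).symm
          _ ≤ (μ (S i)).toReal := ENNReal.toReal_mono (measure_ne_top μ _) h1
      have lam_S_mono : ∀ i, lam (S i) ≤ lam Set.univ := fun i => by
        rw [← hS0]; exact lam_mono _ _ (hSsub0 i)
      have meas_S_mono : ∀ i, (μ (S i)).toReal ≤ (μ Set.univ).toReal := fun i =>
        ENNReal.toReal_mono (measure_ne_top μ _) (measure_mono (Set.subset_univ _))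
      have int_nonneg : ∀ i, 0 ≤ ∫ x, hi i x ∂μ := fun i =>
        MeasureTheory.integral_nonneg (hi_nonneg i)
      have lam_hi_nonneg : ∀ i, 0 ≤ Λ (hi i) := fun i => hpos _ (hi_nonneg i)
      constructor
      · -- Λ h ≤ ∫ h + 2Δ lam univ
        have step : ∀ i, Λ (hi (i + 2)) ≤ ∫ x, hi i x ∂μ := by
          intro i
          calc Λ (hi (i + 2)) ≤ Δ * lam (S (i + 2)) := e2 (i + 2)
            _ ≤ Δ * (μ (S (i + 1))).toReal :=
                mul_le_mul_of_nonneg_left (e6 (i + 1)) hΔ.le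
            _ ≤ ∫ x, hi i x ∂μ := e3 i
        calc Λ h = ∑ i ∈ Finset.range N, Λ (hi i) := lam_sum
          _ = Λ (hi 0) + Λ (hi 1) + ∑ i ∈ Finset.range n, Λ (hi (i + 2)) :=
              sum_range_shift2 _ n
          _ ≤ Δ * lam Set.univ + Δ * lam Set.univ + ∑ i ∈ Finset.range n, ∫ x, hi i x ∂μ := by
              gcongr
              · exact le_trans (e2 0) (mul_le_mul_of_nonneg_left (lam_S_mono 0) hΔ.le)
              · exact le_trans (e2 1) (mul_le_mul_of_nonneg_left (lam_S_mono 1) hΔ.le)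
              · exact step _
          _ ≤ 2 * Δ * lam Set.univ + ∑ i ∈ Finset.range N, ∫ x, hi i x ∂μ := by
              have hsub : Finset.range n ⊆ Finset.range N :=
                Finset.range_mono (Nat.le_add_right n 2)
              have := Finset.sum_le_sum_of_subset_of_nonneg hsub
                (fun i _ _ => int_nonneg i)
              linarith
          _ = (∫ x, h x ∂μ) + 2 * Δ * lam Set.univ := by rw [← int_sum]; ring
      · -- ∫ h ≤ Λ h + 2Δ μ(univ)
        have step : ∀ i, ∫ x, hi (i + 2) x ∂μ ≤ Λ (hi (i + 1)) := by
          intro i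
          calc ∫ x, hi (i + 2) x ∂μ ≤ Δ * (μ (S (i + 2))).toReal := e4 (i + 2)
            _ ≤ Δ * lam (S (i + 2)) := mul_le_mul_of_nonneg_left (e5 (i + 2)) hΔ.le
            _ ≤ Λ (hi (i + 1)) := e1 (i + 1)
        have hshift : ∑ i ∈ Finset.range n, Λ (hi (i + 1)) ≤ ∑ i ∈ Finset.range N, Λ (hi i) := by
          have h1 : ∑ i ∈ Finset.range (n + 1), Λ (hi i) =
              (∑ i ∈ Finset.range n, Λ (hi (i + 1))) + Λ (hi 0) :=
            Finset.sum_range_succ' _ n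
          have h2 : ∑ i ∈ Finset.range (n + 1), Λ (hi i) ≤ ∑ i ∈ Finset.range N, Λ (hi i) := by
            refine Finset.sum_le_sum_of_subset_of_nonneg
              (Finset.range_mono (by omega)) fun i _ _ => lam_hi_nonneg i
          have := lam_hi_nonneg 0
          linarith
        calc ∫ x, h x ∂μ = ∑ i ∈ Finset.range N, ∫ x, hi i x ∂μ := int_sum
          _ = (∫ x, hi 0 x ∂μ) + (∫ x, hi 1 x ∂μ) + ∑ i ∈ Finset.range n, ∫ x, hi (i + 2) x ∂μ :=
              sum_range_shift2 _ n
          _ ≤ Δ * (μ Set.univ).toReal + Δ * (μ Set.univ).toReal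
              + ∑ i ∈ Finset.range n, Λ (hi (i + 1)) := by
              gcongr
              · exact le_trans (e4 0) (mul_le_mul_of_nonneg_left (meas_S_mono 0) hΔ.le)
              · exact le_trans (e4 1) (mul_le_mul_of_nonneg_left (meas_S_mono 1) hΔ.le)
              · exact step _
          _ ≤ 2 * Δ * (μ Set.univ).toReal + ∑ i ∈ Finset.range N, Λ (hi i) := by
              have := hshift; linarith
          _ = Λ h + 2 * Δ * (μ Set.univ).toReal := by rw [← lam_sum]; ring
    -- conclude equality
    have h1 : Λ h ≤ ∫ x, h x ∂μ := by
      refine le_of_forall_pos_le_add fun ε hε => ?_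
      have hc : (0:ℝ) < 2 * (lam Set.univ + 1) := by have := lam_nonneg Set.univ; linarith
      obtain ⟨hk1, -⟩ := key (ε / (2 * (lam Set.univ + 1))) (by positivity)
      refine le_trans hk1 ?_
      have : 2 * (ε / (2 * (lam Set.univ + 1))) * lam Set.univ ≤ ε := by
        have heq : 2 * (ε / (2 * (lam Set.univ + 1))) * lam Set.univ
            = ε * (2 * lam Set.univ) / (2 * (lam Set.univ + 1)) := by ring
        rw [heq, div_le_iff₀ hc]
        have := lam_nonneg Set.univ
        nlinarith
      linarith
    have h2 : ∫ x, h x ∂μ ≤ Λ h := by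
      refine le_of_forall_pos_le_add fun ε hε => ?_
      have hc : (0:ℝ) < 2 * ((μ Set.univ).toReal + 1) := by
        have := ENNReal.toReal_nonneg (a := μ Set.univ); linarith
      obtain ⟨-, hk2⟩ := key (ε / (2 * ((μ Set.univ).toReal + 1))) (by positivity)
      refine le_trans hk2 ?_
      have : 2 * (ε / (2 * ((μ Set.univ).toReal + 1))) * (μ Set.univ).toReal ≤ ε := by
        have heq : 2 * (ε / (2 * ((μ Set.univ).toReal + 1))) * (μ Set.univ).toReal
            = ε * (2 * (μ Set.univ).toReal) / (2 * ((μ Set.univ).toReal + 1)) := by ring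
        rw [heq, div_le_iff₀ hc]
        have := ENNReal.toReal_nonneg (a := μ Set.univ)
        nlinarith
      linarith
    linarith
  -- general h by shifting with a constant
  intro h
  set c : ℝ := ‖h‖ with hc
  have hpos' : ∀ x, 0 ≤ (h + c • (1 : C(Ω, ℝ))) x := by
    intro x
    simp only [ContinuousMap.add_apply, ContinuousMap.smul_apply, ContinuousMap.one_apply,
      smul_eq_mul, mul_one]
    have : |h x| ≤ c := by rw [← Real.norm_eq_abs]; exact h.norm_coe_le_norm x
    have := neg_abs_le (h x)
    linarith
  have hconst : ∀ x, 0 ≤ (c • (1 : C(Ω, ℝ))) x := by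
    intro x
    simp only [ContinuousMap.smul_apply, ContinuousMap.one_apply, smul_eq_mul, mul_one]
    exact norm_nonneg h
  have q1 := main_nonneg _ hpos'
  have q2 := main_nonneg _ hconst
  have hint1 : MeasureTheory.Integrable (fun x => h x) μ := cm_integrable h μ
  have hint2 : MeasureTheory.Integrable (fun x => (c • (1 : C(Ω, ℝ))) x) μ :=
    cm_integrable _ μ
  have hsplit : ∫ x, (h + c • (1 : C(Ω, ℝ))) x ∂μ
      = (∫ x, h x ∂μ) + ∫ x, (c • (1 : C(Ω, ℝ))) x ∂μ := by
    rw [← MeasureTheory.integral_add hint1 hint2]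
    congr 1
  have hΛsplit : Λ (h + c • (1 : C(Ω, ℝ))) = Λ h + Λ (c • (1 : C(Ω, ℝ))) := hadd _ _
  rw [hsplit, hΛsplit] at q1
  linarith

end RMK
section RMK2
open ENNReal TopologicalSpace

theorem rmk_limit {Ω : Type*} [MetricSpace Ω] [CompactSpace Ω] [MeasurableSpace Ω]
    [BorelSpace Ω] (ν : ℕ → Measure Ω) (hfin : ∀ k, IsFiniteMeasure (ν k)) {A : ℝ}
    (hA : ∀ k, ((ν k) Set.univ).toReal ≤ A) :
    ∃ (φ : ℕ → ℕ) (μ : Measure Ω), StrictMono φ ∧ IsFiniteMeasure μ ∧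
      ∀ h : C(Ω, ℝ), Tendsto (fun k => ∫ x, h x ∂(ν (φ k))) atTop (𝓝 (∫ x, h x ∂μ)) := by
  have hA0 : 0 ≤ A := le_trans ENNReal.toReal_nonneg (hA 0)
  have Ibound : ∀ (k : ℕ) (h : C(Ω, ℝ)), |∫ x, h x ∂ν k| ≤ ‖h‖ * A := by
    intro k h
    haveI := hfin k
    have h1 : ‖∫ x, h x ∂ν k‖ ≤ ‖h‖ * ((ν k) Set.univ).toReal :=
      norm_integral_le_of_norm_le_const
        (Filter.Eventually.of_forall fun x => h.norm_coe_le_norm x)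
    rw [Real.norm_eq_abs] at h1
    exact le_trans h1 (mul_le_mul_of_nonneg_left (hA k) (norm_nonneg h))
  haveI : Nonempty C(Ω, ℝ) := ⟨0⟩
  obtain ⟨u, hu⟩ := TopologicalSpace.exists_dense_seq C(Ω, ℝ)
  set y : ℕ → (ℕ → ℝ) := fun k j => ∫ x, (u j) x ∂ν k with hy
  set Ic : ℕ → Set ℝ := fun j => Set.Icc (-(‖u j‖ * A)) (‖u j‖ * A) with hIc
  have hyS : ∀ k, y k ∈ Set.univ.pi Ic := by
    intro k j _
    exact abs_le.mp (Ibound k (u j))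
  have hScpt : IsCompact (Set.univ.pi Ic) := isCompact_univ_pi fun j => isCompact_Icc
  obtain ⟨z, _, φ, hφ, hconv⟩ := hScpt.tendsto_subseq hyS
  have hcoord : ∀ j, Tendsto (fun k => y (φ k) j) atTop (𝓝 (z j)) := fun j =>
    tendsto_pi_nhds.mp hconv j
  have hcauchy : ∀ h : C(Ω, ℝ), CauchySeq fun k => ∫ x, h x ∂ν (φ k) := by
    intro h
    rw [Metric.cauchySeq_iff]
    intro ε hε
    obtain ⟨j, hj⟩ := hu.exists_dist_lt h (show 0 < ε / (4 * (A + 1)) by positivity)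
    have hcj : CauchySeq fun k => y (φ k) j := (hcoord j).cauchySeq
    rw [Metric.cauchySeq_iff] at hcj
    obtain ⟨N, hN⟩ := hcj (ε / 2) (by positivity)
    refine ⟨N, fun a ha b hb => ?_⟩
    have key : ∀ k, |(∫ x, h x ∂ν (φ k)) - ∫ x, (u j) x ∂ν (φ k)| ≤ ε / 4 := by
      intro k
      haveI := hfin (φ k)
      have heq : (∫ x, h x ∂ν (φ k)) - ∫ x, (u j) x ∂ν (φ k)
          = ∫ x, (h - u j) x ∂ν (φ k) := by
        rw [← MeasureTheory.integral_sub (cm_integrable h _) (cm_integrable (u j) _)]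
        simp only [ContinuousMap.sub_apply]
      rw [heq]
      refine le_trans (Ibound (φ k) (h - u j)) ?_
      have hnorm : ‖h - u j‖ = dist h (u j) := (dist_eq_norm _ _).symm
      have h2 : ‖h - u j‖ * A ≤ (ε / (4 * (A + 1))) * A := by
        rw [hnorm]
        exact mul_le_mul_of_nonneg_right hj.le hA0
      refine le_trans h2 ?_
      have heq2 : (ε / (4 * (A + 1))) * A = ε * (4 * A) / (4 * (4 * (A + 1))) := by
        field_simp
      rw [heq2, div_le_div_iff₀ (by positivity) (by norm_num : (0:ℝ) < 4)]
      nlinarith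
    have hmid : |(∫ x, (u j) x ∂ν (φ a)) - ∫ x, (u j) x ∂ν (φ b)| < ε / 2 := by
      have := hN a ha b hb
      rwa [Real.dist_eq] at this
    rw [Real.dist_eq]
    calc |(∫ x, h x ∂ν (φ a)) - ∫ x, h x ∂ν (φ b)|
        ≤ |(∫ x, h x ∂ν (φ a)) - ∫ x, (u j) x ∂ν (φ a)|
          + |(∫ x, (u j) x ∂ν (φ a)) - ∫ x, (u j) x ∂ν (φ b)|
          + |(∫ x, (u j) x ∂ν (φ b)) - ∫ x, h x ∂ν (φ b)| := by
          have := abs_sub_le ((∫ x, h x ∂ν (φ a))) ((∫ x, (u j) x ∂ν (φ a)))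
            ((∫ x, h x ∂ν (φ b)))
          have h2 := abs_sub_le ((∫ x, (u j) x ∂ν (φ a))) ((∫ x, (u j) x ∂ν (φ b)))
            ((∫ x, h x ∂ν (φ b)))
          linarith
      _ < ε := by
          have h1 := key a
          have h2 := key b
          rw [abs_sub_comm] at h2
          linarith
  have hlim : ∀ h : C(Ω, ℝ), ∃ c, Tendsto (fun k => ∫ x, h x ∂ν (φ k)) atTop (𝓝 c) :=
    fun h => cauchySeq_tendsto_of_complete (hcauchy h)
  choose Λ hΛ using hlim
  have hadd : ∀ f g : C(Ω, ℝ), Λ (f + g) = Λ f + Λ g := by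
    intro f g
    refine tendsto_nhds_unique (hΛ (f + g)) ?_
    have h1 := (hΛ f).add (hΛ g)
    refine Tendsto.congr (fun k => ?_) h1
    haveI := hfin (φ k)
    rw [← MeasureTheory.integral_add (cm_integrable f _) (cm_integrable g _)]
    simp only [ContinuousMap.add_apply]
  have hsmul : ∀ (c : ℝ) (f : C(Ω, ℝ)), Λ (c • f) = c * Λ f := by
    intro c f
    refine tendsto_nhds_unique (hΛ (c • f)) ?_
    have h1 := (hΛ f).const_mul c
    refine Tendsto.congr (fun k => ?_) h1
    haveI := hfin (φ k)
    rw [← MeasureTheory.integral_const_mul]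
    simp only [ContinuousMap.smul_apply, smul_eq_mul]
  have hpos : ∀ f : C(Ω, ℝ), (∀ x, 0 ≤ f x) → 0 ≤ Λ f := by
    intro f hf
    exact ge_of_tendsto' (hΛ f) fun k => MeasureTheory.integral_nonneg fun x => hf x
  obtain ⟨μ, hfinμ, hrep⟩ := riesz_rep Λ hadd hsmul hpos
  refine ⟨φ, μ, hφ, hfinμ, fun h => ?_⟩
  rw [hrep h]
  exact hΛ h

end RMK2
section Main
open ENNReal TopologicalSpace

lemma treeNorm_dist_le {d : ℕ} {K : Set (Fin d → ℝ)} {R : ℝ} (hR : 1 ≤ R)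
    (hKR : ∀ (x : K) (i : Fin d), |(x : Fin d → ℝ) i| ≤ R) {L : ℕ} {f : C(K, ℝ)}
    {M : ℝ≥0∞} (hM : M ≠ ⊤) (hf : treeNorm K L f ≤ M) (x y : K) :
    dist (f x) (f y) ≤ M.toReal * dist x y := by
  have h := (treeNorm_est hR hKR L f).2 x y
  have h2 : (‖f x - f y‖₊ : ℝ≥0∞) ≤ M * edist x y := le_trans h (mul_le_mul_left hf _)
  rw [← enorm_eq_nnnorm, ← ofReal_norm] at h2
  have hMe : M * edist x y = ENNReal.ofReal (M.toReal * dist x y) := by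
    rw [ENNReal.ofReal_mul ENNReal.toReal_nonneg, ENNReal.ofReal_toReal hM, ← edist_dist]
  rw [hMe] at h2
  have h3 := (ENNReal.ofReal_le_ofReal_iff (by positivity)).mp h2
  rwa [Real.norm_eq_abs, ← Real.dist_eq] at h3

/-- `ε n = 1/(n+1)` in `ℝ≥0∞`. -/
noncomputable def epsSeq (n : ℕ) : ℝ≥0∞ := ((n : ℝ≥0∞) + 1)⁻¹

lemma epsSeq_ne_zero (n : ℕ) : epsSeq n ≠ 0 := by
  simp [epsSeq]

lemma epsSeq_ne_top (n : ℕ) : epsSeq n ≠ ⊤ := by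
  simp [epsSeq]

lemma epsSeq_le_one (n : ℕ) : epsSeq n ≤ 1 := by
  rw [epsSeq]
  rw [ENNReal.inv_le_one]
  exact le_add_self

lemma epsSeq_anti : Antitone epsSeq := by
  intro a b hab
  rw [epsSeq, epsSeq]
  refine ENNReal.inv_le_inv.mpr ?_
  have : (a : ℝ≥0∞) ≤ (b : ℝ≥0∞) := by exact_mod_cast hab
  exact add_le_add_left this 1

lemma epsSeq_iInf : ⨅ n, epsSeq n = 0 := by
  rw [← ENNReal.bot_eq_zero, iInf_eq_bot]
  intro b hb
  have hb0 : b ≠ 0 := by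
    rw [← ENNReal.bot_eq_zero]
    exact (ne_of_gt hb)
  obtain ⟨n, hn⟩ := ENNReal.exists_inv_nat_lt hb0
  refine ⟨n, lt_of_le_of_lt ?_ hn⟩
  rw [epsSeq]
  refine ENNReal.inv_le_inv.mpr ?_
  exact le_add_right (le_refl _)

lemma iInf_add_epsSeq (M : ℕ → ℝ≥0∞) (hM : Antitone M) :
    (⨅ j, (M j + epsSeq j)) = ⨅ j, M j := by
  refine le_antisymm ?_ ?_
  · have h1 : (⨅ j, (M j + epsSeq j)) = (⨅ j, M j) + ⨅ j, epsSeq j := by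
      refine (ENNReal.iInf_add_iInf fun i j => ⟨max i j, ?_⟩).symm
      exact add_le_add (hM (le_max_left i j)) (epsSeq_anti (le_max_right i j))
    rw [h1, epsSeq_iInf, add_zero]
  · exact le_iInf fun j => le_trans (iInf_le _ j) (le_add_right (le_refl _))

theorem tree_main {d : ℕ} {K : Set (Fin d → ℝ)} (hK : IsCompact K) {R : ℝ} (hR : 1 ≤ R)
    (hKR : ∀ (x : K) (i : Fin d), |(x : Fin d → ℝ) i| ≤ R) :
    ∀ (L : ℕ) (M : ℕ → ℝ≥0∞), Antitone M → M 0 ≠ ⊤ →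
    ∀ g : ℕ → C(K, ℝ), (∀ n, treeNorm K L (g n) ≤ M n) →
    ∃ (F : C(K, ℝ)) (φ : ℕ → ℕ), StrictMono φ ∧ Tendsto (g ∘ φ) atTop (𝓝 F) ∧
      treeNorm K L F ≤ ⨅ n, M n := by
  haveI : CompactSpace K := isCompact_iff_compactSpace.mp hK
  have hMntop : ∀ (M : ℕ → ℝ≥0∞), Antitone M → M 0 ≠ ⊤ → ∀ n, M n ≠ ⊤ := by
    intro M hanti h0 n
    exact ne_top_of_le_ne_top h0 (hanti (Nat.zero_le n))
  intro L
  induction L with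
  | zero =>
    intro M hManti hM0 g hg
    have hex : ∀ n, ∃ p : (Fin d → ℝ) × ℝ,
        (∀ x : K, g n x = (∑ i : Fin d, p.1 i * (x : Fin d → ℝ) i) + p.2) ∧
        ENNReal.ofReal ((∑ i : Fin d, |p.1 i|) + |p.2|) < M n + epsSeq n := by
      intro n
      have h1 : treeNorm K 0 (g n) < M n + epsSeq n :=
        lt_of_le_of_lt (hg n) (ENNReal.lt_add_right (hMntop M hManti hM0 n) (epsSeq_ne_zero n))
      rw [show treeNorm K 0 (g n) = ⨅ p : {p : (Fin d → ℝ) × ℝ //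
        ∀ x : K, g n x = (∑ i : Fin d, p.1 i * (x : Fin d → ℝ) i) + p.2},
        ENNReal.ofReal ((∑ i : Fin d, |p.1.1 i|) + |p.1.2|) from rfl] at h1
      obtain ⟨⟨p, hp⟩, hlt⟩ := iInf_lt_iff.mp h1
      exact ⟨p, hp, hlt⟩
    choose p hp hplt using hex
    set c : (Fin d → ℝ) × ℝ → ℝ := fun q => (∑ i : Fin d, |q.1 i|) + |q.2| with hc
    have hc0 : ∀ q, 0 ≤ c q := fun q => by positivity
    set A : ℝ := (M 0 + 1).toReal with hA
    have hM0top : M 0 + 1 ≠ ⊤ := ENNReal.add_ne_top.mpr ⟨hM0, one_ne_top⟩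
    have hcb : ∀ n, c (p n) ≤ A := by
      intro n
      have h1 : ENNReal.ofReal (c (p n)) ≤ M 0 + 1 :=
        le_trans (hplt n).le (add_le_add (hManti (Nat.zero_le n)) (epsSeq_le_one n))
      have h2 := ENNReal.toReal_mono hM0top h1
      rwa [ENNReal.toReal_ofReal (hc0 _)] at h2
    have hmem : ∀ n, p n ∈ Metric.closedBall (0 : (Fin d → ℝ) × ℝ) A := by
      intro n
      rw [Metric.mem_closedBall, dist_zero_right, Prod.norm_def]
      refine max_le ?_ ?_
      · rw [pi_norm_le_iff_of_nonneg (le_trans (hc0 _) (hcb n))]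
        intro i
        rw [Real.norm_eq_abs]
        refine le_trans ?_ (hcb n)
        rw [hc]
        have h1 : |(p n).1 i| ≤ ∑ j : Fin d, |(p n).1 j| :=
          Finset.single_le_sum (f := fun j => |(p n).1 j|) (fun j _ => abs_nonneg _)
            (Finset.mem_univ i)
        have h2 : (0:ℝ) ≤ |(p n).2| := abs_nonneg _
        simp only []
        linarith
      · rw [Real.norm_eq_abs]
        refine le_trans ?_ (hcb n)
        rw [hc]
        have h1 : (0:ℝ) ≤ ∑ j : Fin d, |(p n).1 j| := by positivity
        simp only []
        linarith
    obtain ⟨q, -, φ, hφ, hconv⟩ :=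
      tendsto_subseq_of_bounded Metric.isBounded_closedBall hmem
    have hFcont : Continuous fun x : K => (∑ i : Fin d, q.1 i * (x : Fin d → ℝ) i) + q.2 := by
      refine Continuous.add ?_ continuous_const
      refine continuous_finset_sum _ fun i _ => ?_
      exact continuous_const.mul ((continuous_apply i).comp continuous_subtype_val)
    set F : C(K, ℝ) := ⟨_, hFcont⟩ with hF
    have hrepF : ∀ x : K, F x = (∑ i : Fin d, q.1 i * (x : Fin d → ℝ) i) + q.2 := fun x => rfl
    -- error bound
    set E : (Fin d → ℝ) × ℝ → ℝ := fun r => (∑ i : Fin d, |r.1 i - q.1 i|) * R + |r.2 - q.2|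
      with hE
    have hEcont : Continuous E := by
      refine Continuous.add (Continuous.mul ?_ continuous_const) ?_
      · exact continuous_finset_sum _ fun i _ =>
          continuous_abs.comp (((continuous_apply i).comp continuous_fst).sub continuous_const)
      · exact continuous_abs.comp (continuous_snd.sub continuous_const)
    have hEq : E q = 0 := by simp [hE]
    have hEtend : Tendsto (fun k => E (p (φ k))) atTop (𝓝 0) := by
      have := (hEcont.tendsto q).comp hconv
      rwa [hEq] at this
    have hptbound : ∀ k (x : K), dist (g (φ k) x) (F x) ≤ E (p (φ k)) := by
      intro k x
      rw [Real.dist_eq, hp (φ k) x, hrepF x]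
      have heq : ((∑ i : Fin d, (p (φ k)).1 i * (x : Fin d → ℝ) i) + (p (φ k)).2)
          - ((∑ i : Fin d, q.1 i * (x : Fin d → ℝ) i) + q.2)
          = (∑ i : Fin d, ((p (φ k)).1 i - q.1 i) * (x : Fin d → ℝ) i)
            + ((p (φ k)).2 - q.2) := by
        rw [Finset.sum_congr rfl (fun i _ => sub_mul ((p (φ k)).1 i) (q.1 i) _),
          Finset.sum_sub_distrib]
        ring
      rw [heq, hE]
      calc |(∑ i : Fin d, ((p (φ k)).1 i - q.1 i) * (x : Fin d → ℝ) i) + ((p (φ k)).2 - q.2)|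
          ≤ |∑ i : Fin d, ((p (φ k)).1 i - q.1 i) * (x : Fin d → ℝ) i| + |(p (φ k)).2 - q.2| :=
            abs_add_le _ _
        _ ≤ (∑ i : Fin d, |((p (φ k)).1 i - q.1 i) * (x : Fin d → ℝ) i|) + |(p (φ k)).2 - q.2| :=
            by gcongr; exact Finset.abs_sum_le_sum_abs _ _
        _ ≤ (∑ i : Fin d, |(p (φ k)).1 i - q.1 i| * R) + |(p (φ k)).2 - q.2| := by
            gcongr with i _
            rw [abs_mul]
            exact mul_le_mul_of_nonneg_left (hKR x i) (abs_nonneg _)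
        _ = (∑ i : Fin d, |(p (φ k)).1 i - q.1 i|) * R + |(p (φ k)).2 - q.2| := by
            rw [Finset.sum_mul]
    have htu : TendstoUniformly (fun k => ⇑(g (φ k))) (⇑F) atTop := by
      rw [Metric.tendstoUniformly_iff]
      intro ε hε
      filter_upwards [(Metric.tendsto_nhds.mp hEtend) ε hε] with k hk x
      rw [Real.dist_eq, sub_zero] at hk
      have := hptbound k x
      rw [dist_comm]
      exact lt_of_le_of_lt this (lt_of_le_of_lt (le_abs_self _) hk)
    refine ⟨F, φ, hφ, (ContinuousMap.tendsto_iff_tendstoUniformly).mpr htu, ?_⟩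
    -- norm bound
    have hFle : treeNorm K 0 F ≤ ENNReal.ofReal (c q) := by
      exact iInf_le (fun p : {p : (Fin d → ℝ) × ℝ //
        ∀ x : K, F x = (∑ i : Fin d, p.1 i * (x : Fin d → ℝ) i) + p.2} =>
        ENNReal.ofReal ((∑ i : Fin d, |p.1.1 i|) + |p.1.2|)) ⟨q, hrepF⟩
    refine le_trans hFle ?_
    have hccont : Continuous c := by
      refine Continuous.add ?_ (continuous_abs.comp continuous_snd)
      exact continuous_finset_sum _ fun i _ =>
        continuous_abs.comp ((continuous_apply i).comp continuous_fst)
    have hctend : Tendsto (fun k => ENNReal.ofReal (c (p (φ k)))) atTop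
        (𝓝 (ENNReal.ofReal (c q))) :=
      (ENNReal.continuous_ofReal.tendsto _).comp ((hccont.tendsto q).comp hconv)
    rw [← iInf_add_epsSeq M hManti]
    refine le_iInf fun j => ?_
    refine le_of_tendsto hctend ?_
    filter_upwards [hφ.tendsto_atTop.eventually_ge_atTop j] with k hk
    refine le_trans (hplt (φ k)).le ?_
    exact add_le_add (hManti hk) (epsSeq_anti hk)
  | succ L ih =>
    intro M hManti hM0 g hg
    haveI : BorelSpace C(↥K, ℝ) := ⟨rfl⟩
    have hM0top : M 0 + 1 ≠ ⊤ := ENNReal.add_ne_top.mpr ⟨hM0, one_ne_top⟩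
    set H : Set C(↥K, ℝ) := {h : C(↥K, ℝ) | treeNorm K L h ≤ 1} with hHdef
    have hHseq : IsSeqCompact H := by
      intro s hs
      obtain ⟨F, ψ, hψ, hconv, hFnorm⟩ := ih (fun _ => 1) (fun _ _ _ => le_refl 1)
        (by simp) s hs
      refine ⟨F, ?_, ψ, hψ, hconv⟩
      rw [hHdef, Set.mem_setOf_eq]
      simpa using hFnorm
    have hHcpt : IsCompact H := hHseq.isCompact
    have hHmeas : MeasurableSet H := hHcpt.isClosed.measurableSet
    haveI : CompactSpace ↥H := isCompact_iff_compactSpace.mp hHcpt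
    have hex : ∀ n, ∃ pq : Measure C(↥K, ℝ) × Measure C(↥K, ℝ),
        IsBarronRep K H (g n) pq.1 pq.2 ∧
        pq.1 Set.univ + pq.2 Set.univ < M n + epsSeq n := by
      intro n
      have h1 : treeNorm K (L + 1) (g n) < M n + epsSeq n :=
        lt_of_le_of_lt (hg n)
          (ENNReal.lt_add_right (hMntop M hManti hM0 n) (epsSeq_ne_zero n))
      rw [show treeNorm K (L + 1) (g n)
        = ⨅ pq : {pq : Measure C(↥K, ℝ) × Measure C(↥K, ℝ) //
            IsBarronRep K H (g n) pq.1 pq.2},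
          pq.1.1 Set.univ + pq.1.2 Set.univ from rfl] at h1
      obtain ⟨⟨pq, hpq⟩, hlt⟩ := iInf_lt_iff.mp h1
      exact ⟨pq, hpq, hlt⟩
    choose pq hpq hmass using hex
    have hfinp : ∀ n, IsFiniteMeasure (pq n).1 := fun n => (hpq n).1
    have hfinn : ∀ n, IsFiniteMeasure (pq n).2 := fun n => (hpq n).2.1
    have hp0 : ∀ n, (pq n).1 Hᶜ = 0 := fun n => (hpq n).2.2.1
    have hn0 : ∀ n, (pq n).2 Hᶜ = 0 := fun n => (hpq n).2.2.2.1
    have heval : ∀ n (x : K), g n x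
        = (∫ g' : C(↥K, ℝ), relu (g' x) ∂(pq n).1)
          - ∫ g' : C(↥K, ℝ), relu (g' x) ∂(pq n).2 := fun n => (hpq n).2.2.2.2
    have hemb : MeasurableEmbedding (Subtype.val : ↥H → C(↥K, ℝ)) :=
      MeasurableEmbedding.subtype_coe hHmeas
    set νp : ℕ → Measure ↥H := fun n => Measure.comap Subtype.val (pq n).1 with hνp
    set νn : ℕ → Measure ↥H := fun n => Measure.comap Subtype.val (pq n).2 with hνn
    have hfull : ∀ (μ : Measure C(↥K, ℝ)), μ Hᶜ = 0 → μ H = μ Set.univ := by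
      intro μ h0
      refine le_antisymm (measure_mono (Set.subset_univ _)) ?_
      calc μ Set.univ = μ (H ∪ Hᶜ) := by rw [Set.union_compl_self]
        _ ≤ μ H + μ Hᶜ := measure_union_le _ _
        _ = μ H := by rw [h0, add_zero]
    have hνp_univ : ∀ n, νp n Set.univ = (pq n).1 Set.univ := by
      intro n
      rw [hνp]
      rw [hemb.comap_apply, Set.image_univ, Subtype.range_coe]
      exact hfull _ (hp0 n)
    have hνn_univ : ∀ n, νn n Set.univ = (pq n).2 Set.univ := by
      intro n
      rw [hνn]
      rw [hemb.comap_apply, Set.image_univ, Subtype.range_coe]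
      exact hfull _ (hn0 n)
    have hfinνp : ∀ n, IsFiniteMeasure (νp n) := by
      intro n
      haveI := hfinp n
      exact ⟨by rw [hνp_univ n]; exact measure_lt_top _ _⟩
    have hfinνn : ∀ n, IsFiniteMeasure (νn n) := by
      intro n
      haveI := hfinn n
      exact ⟨by rw [hνn_univ n]; exact measure_lt_top _ _⟩
    have hmass_le : ∀ n, (pq n).1 Set.univ + (pq n).2 Set.univ ≤ M 0 + 1 := fun n =>
      le_trans (hmass n).le (add_le_add (hManti (Nat.zero_le n)) (epsSeq_le_one n))
    have hνpA : ∀ n, ((νp n) Set.univ).toReal ≤ (M 0 + 1).toReal := by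
      intro n
      rw [hνp_univ n]
      refine ENNReal.toReal_mono hM0top ?_
      exact le_trans (le_add_right (le_refl _)) (hmass_le n)
    have hνnA : ∀ n, ((νn n) Set.univ).toReal ≤ (M 0 + 1).toReal := by
      intro n
      rw [hνn_univ n]
      refine ENNReal.toReal_mono hM0top ?_
      exact le_trans (le_add_left (le_refl _)) (hmass_le n)
    obtain ⟨φ1, mup, hφ1, hfinup, hup⟩ := rmk_limit νp hfinνp hνpA
    obtain ⟨φ2, mun, hφ2, hfinun, hun⟩ :=
      rmk_limit (fun k => νn (φ1 k)) (fun k => hfinνn (φ1 k)) (fun k => hνnA (φ1 k))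
    set φ : ℕ → ℕ := fun k => φ1 (φ2 k) with hφdef
    have hφ : StrictMono φ := hφ1.comp hφ2
    have hup' : ∀ h : C(↥H, ℝ), Tendsto (fun k => ∫ x, h x ∂νp (φ k)) atTop
        (𝓝 (∫ x, h x ∂mup)) := fun h => (hup h).comp hφ2.tendsto_atTop
    have hun' : ∀ h : C(↥H, ℝ), Tendsto (fun k => ∫ x, h x ∂νn (φ k)) atTop
        (𝓝 (∫ x, h x ∂mun)) := fun h => hun h
    -- transfer integrals to the subtype
    have htransfer : ∀ (μ : Measure C(↥K, ℝ)), μ Hᶜ = 0 → ∀ (x : K),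
        ∫ g' : C(↥K, ℝ), relu (g' x) ∂μ
          = ∫ y : ↥H, relu ((y : C(↥K, ℝ)) x) ∂(Measure.comap Subtype.val μ) := by
      intro μ h0 x
      have hae : ∀ᵐ g' ∂μ, g' ∈ H := by
        rw [MeasureTheory.ae_iff]
        exact h0
      have hcontev : Continuous (fun g' : C(↥K, ℝ) => relu (g' x)) :=
        continuous_relu.comp (continuous_eval_const x)
      have hmapcomap : Measure.map (Subtype.val : ↥H → C(↥K, ℝ))
          (Measure.comap Subtype.val μ) = μ := by
        rw [hemb.map_comap μ, Subtype.range_coe]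
        exact Measure.restrict_eq_self_of_ae_mem hae
      calc ∫ g' : C(↥K, ℝ), relu (g' x) ∂μ
          = ∫ g' : C(↥K, ℝ), relu (g' x)
              ∂(Measure.map Subtype.val (Measure.comap Subtype.val μ)) := by rw [hmapcomap]
        _ = ∫ y : ↥H, relu ((y : C(↥K, ℝ)) x) ∂(Measure.comap Subtype.val μ) :=
            integral_map (f := fun g' : C(↥K, ℝ) => relu (g' x))
              hemb.measurable.aemeasurable (by rw [hmapcomap]; exact hcontev.aestronglyMeasurable)
    have hevcont : ∀ x : K, Continuous (fun y : ↥H => relu ((y : C(↥K, ℝ)) x)) := fun x =>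
      continuous_relu.comp ((continuous_eval_const x).comp continuous_subtype_val)
    set ev : K → C(↥H, ℝ) := fun x => ⟨_, hevcont x⟩ with hev
    set G : ↥K → ℝ := fun x => (∫ y, ev x y ∂mup) - ∫ y, ev x y ∂mun with hG
    have hGpt : ∀ x : K, Tendsto (fun k => g (φ k) x) atTop (𝓝 (G x)) := by
      intro x
      have h1 := (hup' (ev x)).sub (hun' (ev x))
      refine Tendsto.congr (fun k => ?_) h1
      rw [heval (φ k) x, htransfer _ (hp0 (φ k)) x, htransfer _ (hn0 (φ k)) x]
      rfl
    have hlipreal : ∀ (n : ℕ) (x y : K), dist (g n x) (g n y) ≤ (M 0).toReal * dist x y :=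
      fun n x y => treeNorm_dist_le hR hKR hM0
        (le_trans (hg n) (hManti (Nat.zero_le n))) x y
    have hequi : Equicontinuous (fun k => ⇑(g (φ k))) := by
      refine Metric.equicontinuous_of_continuity_modulus (fun t => (M 0).toReal * t) ?_ _
        (fun x y k => hlipreal (φ k) x y)
      have h1 : Tendsto (fun t : ℝ => (M 0).toReal * t) (𝓝 0) (𝓝 ((M 0).toReal * 0)) :=
        (continuous_const.mul continuous_id).tendsto 0
      simpa using h1
    have hGpi : Tendsto (fun k => ⇑(g (φ k))) atTop (𝓝 G) := tendsto_pi_nhds.mpr hGpt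
    have hGuf := (hequi.tendsto_uniformFun_iff_pi atTop G).mpr hGpi
    rw [UniformFun.tendsto_iff_tendstoUniformly] at hGuf
    have hGuf' : TendstoUniformly (fun k => ⇑(g (φ k))) G atTop := hGuf
    have hGcont : Continuous G :=
      hGuf'.continuous (Filter.Frequently.of_forall fun k => (g (φ k)).continuous)
    set F : C(↥K, ℝ) := ⟨G, hGcont⟩ with hF
    have hconvF : Tendsto (g ∘ φ) atTop (𝓝 F) :=
      (ContinuousMap.tendsto_iff_tendstoUniformly).mpr hGuf'
    -- representation of F
    set μp' : Measure C(↥K, ℝ) := Measure.map Subtype.val mup with hμp'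
    set μn' : Measure C(↥K, ℝ) := Measure.map Subtype.val mun with hμn'
    have hmap_univ : ∀ (m : Measure ↥H),
        Measure.map (Subtype.val : ↥H → C(↥K, ℝ)) m Set.univ = m Set.univ := by
      intro m
      rw [Measure.map_apply hemb.measurable MeasurableSet.univ, Set.preimage_univ]
    have hmap_compl : ∀ (m : Measure ↥H),
        Measure.map (Subtype.val : ↥H → C(↥K, ℝ)) m Hᶜ = 0 := by
      intro m
      rw [Measure.map_apply hemb.measurable hHmeas.compl]
      have hpre : (Subtype.val : ↥H → C(↥K, ℝ)) ⁻¹' Hᶜ = ∅ := by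
        ext y
        simp [y.2]
      rw [hpre, measure_empty]
    have hmapint : ∀ (m : Measure ↥H) (x : K),
        ∫ g' : C(↥K, ℝ), relu (g' x) ∂(Measure.map Subtype.val m)
          = ∫ y : ↥H, relu ((y : C(↥K, ℝ)) x) ∂m := by
      intro m x
      have hcontev : Continuous (fun g' : C(↥K, ℝ) => relu (g' x)) :=
        continuous_relu.comp (continuous_eval_const x)
      exact integral_map (f := fun g' : C(↥K, ℝ) => relu (g' x))
        hemb.measurable.aemeasurable hcontev.aestronglyMeasurable
    have hFrep : IsBarronRep K H F μp' μn' := by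
      refine ⟨⟨by rw [hμp', hmap_univ]; exact measure_lt_top _ _⟩,
        ⟨by rw [hμn', hmap_univ]; exact measure_lt_top _ _⟩,
        by rw [hμp']; exact hmap_compl mup, by rw [hμn']; exact hmap_compl mun, ?_⟩
      intro x
      rw [hμp', hμn', hmapint mup x, hmapint mun x]
      rfl
    have hnormF : treeNorm K (L + 1) F ≤ μp' Set.univ + μn' Set.univ := by
      rw [show treeNorm K (L + 1) F
        = ⨅ pq : {pq : Measure C(↥K, ℝ) × Measure C(↥K, ℝ) //
            IsBarronRep K H F pq.1 pq.2},
          pq.1.1 Set.univ + pq.1.2 Set.univ from rfl]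
      exact iInf_le (fun pq : {pq : Measure C(↥K, ℝ) × Measure C(↥K, ℝ) //
            IsBarronRep K H F pq.1 pq.2} => pq.1.1 Set.univ + pq.1.2 Set.univ)
        ⟨(μp', μn'), hFrep⟩
    -- mass limits
    have hone : ∀ (m : Measure ↥H), IsFiniteMeasure m →
        ∫ y, (1 : C(↥H, ℝ)) y ∂m = (m Set.univ).toReal := by
      intro m hm
      haveI := hm
      simp only [ContinuousMap.one_apply]
      rw [MeasureTheory.integral_const, smul_eq_mul, mul_one, measureReal_def]
    have hmassp : Tendsto (fun k => ((νp (φ k)) Set.univ).toReal) atTop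
        (𝓝 ((mup Set.univ).toReal)) := by
      have h1 := hup' 1
      rw [hone mup hfinup] at h1
      refine Tendsto.congr (fun k => ?_) h1
      exact hone _ (hfinνp (φ k))
    have hmassn : Tendsto (fun k => ((νn (φ k)) Set.univ).toReal) atTop
        (𝓝 ((mun Set.univ).toReal)) := by
      have h1 := hun' 1
      rw [hone mun hfinun] at h1
      refine Tendsto.congr (fun k => ?_) h1
      exact hone _ (hfinνn (φ k))
    have hsum_le : ∀ j, (mup Set.univ).toReal + (mun Set.univ).toReal
        ≤ (M j + epsSeq j).toReal := by
      intro j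
      have hjtop : M j + epsSeq j ≠ ⊤ :=
        ENNReal.add_ne_top.mpr ⟨hMntop M hManti hM0 j, epsSeq_ne_top j⟩
      refine le_of_tendsto (hmassp.add hmassn) ?_
      filter_upwards [hφ.tendsto_atTop.eventually_ge_atTop j] with k hk
      have h1 : νp (φ k) Set.univ + νn (φ k) Set.univ ≤ M j + epsSeq j := by
        rw [hνp_univ, hνn_univ]
        exact le_trans (hmass (φ k)).le (add_le_add (hManti hk) (epsSeq_anti hk))
      haveI := hfinνp (φ k)
      haveI := hfinνn (φ k)
      calc ((νp (φ k)) Set.univ).toReal + ((νn (φ k)) Set.univ).toReal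
          = (νp (φ k) Set.univ + νn (φ k) Set.univ).toReal :=
            (ENNReal.toReal_add (measure_ne_top _ _) (measure_ne_top _ _)).symm
        _ ≤ (M j + epsSeq j).toReal := ENNReal.toReal_mono hjtop h1
    refine ⟨F, φ, hφ, hconvF, ?_⟩
    refine le_trans hnormF ?_
    haveI := hfinup
    haveI := hfinun
    have hmass_eq : μp' Set.univ + μn' Set.univ
        = ENNReal.ofReal ((mup Set.univ).toReal + (mun Set.univ).toReal) := by
      rw [hμp', hμn', hmap_univ, hmap_univ,
        ENNReal.ofReal_add ENNReal.toReal_nonneg ENNReal.toReal_nonneg,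
        ENNReal.ofReal_toReal (measure_ne_top _ _), ENNReal.ofReal_toReal (measure_ne_top _ _)]
    rw [hmass_eq, ← iInf_add_epsSeq M hManti]
    refine le_iInf fun j => ?_
    have hjtop : M j + epsSeq j ≠ ⊤ :=
      ENNReal.add_ne_top.mpr ⟨hMntop M hManti hM0 j, epsSeq_ne_top j⟩
    calc ENNReal.ofReal ((mup Set.univ).toReal + (mun Set.univ).toReal)
        ≤ ENNReal.ofReal ((M j + epsSeq j).toReal) := ENNReal.ofReal_le_ofReal (hsum_le j)
      _ = M j + epsSeq j := ENNReal.ofReal_toReal hjtop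

end Main
section Final
open ENNReal

/-- **Compactness theorem.** If `f_n` is a sequence in `W^L(K)` (for `K ⊆ ℝ^d`
compact) with `C := liminf ‖f_n‖_{W^L(K)} < ∞`, then there exist `f ∈ W^L(K)` with
`‖f‖_{W^L(K)} ≤ C` and a subsequence `f_{n_k} → f` strongly in `C^{0,α}(K)` for all `α < 1`. -/
theorem treeSpace_compactness {d : ℕ} (K : Set (Fin d → ℝ)) (hK : IsCompact K)
    (L : ℕ) (f : ℕ → C(K, ℝ))
    (hC : liminf (fun n => treeNorm K L (f n)) atTop ≠ ⊤) :
    ∃ (F : C(K, ℝ)) (φ : ℕ → ℕ), StrictMono φ ∧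
      treeNorm K L F ≤ liminf (fun n => treeNorm K L (f n)) atTop ∧
      ∀ α ∈ Set.Ioo (0 : ℝ) 1,
        Tendsto (fun k => holderNorm K α (fun x : K => f (φ k) x - F x)) atTop (𝓝 0) := by
  haveI : CompactSpace K := isCompact_iff_compactSpace.mp hK
  -- a bound on K
  obtain ⟨R0, hR0⟩ := hK.isBounded.exists_norm_le
  set R : ℝ := max R0 1 with hRdef
  have hR : 1 ≤ R := le_max_right _ _
  have hKR : ∀ (x : K) (i : Fin d), |(x : Fin d → ℝ) i| ≤ R := by
    intro x i
    have h1 : ‖(x : Fin d → ℝ) i‖ ≤ ‖(x : Fin d → ℝ)‖ := norm_le_pi_norm _ i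
    have h2 : ‖(x : Fin d → ℝ)‖ ≤ R0 := hR0 _ x.2
    rw [Real.norm_eq_abs] at h1
    exact le_trans h1 (le_trans h2 (le_max_left _ _))
  set C : ℝ≥0∞ := liminf (fun n => treeNorm K L (f n)) atTop with hCdef
  -- extract a subsequence with norms close to the liminf
  have hfreq : ∀ n : ℕ, ∃ᶠ k in atTop, treeNorm K L (f k) < C + epsSeq n := by
    intro n
    have hlt : C < C + epsSeq n := ENNReal.lt_add_right hC (epsSeq_ne_zero n)
    exact frequently_lt_of_liminf_lt (u := fun k => treeNorm K L (f k))
      (by isBoundedDefault) hlt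
  obtain ⟨ψ0, hψ0, hψ0P⟩ := extraction_forall_of_frequently hfreq
  have hg : ∀ n, treeNorm K L (f (ψ0 n)) ≤ C + epsSeq n := fun n => (hψ0P n).le
  have hManti : Antitone (fun n => C + epsSeq n) := fun a b hab =>
    add_le_add (le_refl C) (epsSeq_anti hab)
  have hM0 : C + epsSeq 0 ≠ ⊤ := ENNReal.add_ne_top.mpr ⟨hC, epsSeq_ne_top 0⟩
  obtain ⟨F, φ1, hφ1, hconv, hFnorm⟩ :=
    tree_main hK hR hKR L (fun n => C + epsSeq n) hManti hM0 (fun n => f (ψ0 n)) hg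
  have hFC : treeNorm K L F ≤ C := by
    refine le_trans hFnorm ?_
    rw [iInf_add_epsSeq (fun _ => C) (fun _ _ _ => le_refl C), iInf_const]
  set ψ : ℕ → ℕ := fun k => ψ0 (φ1 k) with hψdef
  have hψ : StrictMono ψ := hψ0.comp hφ1
  refine ⟨F, ψ, hψ, hFC, ?_⟩
  -- Hölder convergence
  have hC1top : C + 1 ≠ ⊤ := ENNReal.add_ne_top.mpr ⟨hC, one_ne_top⟩
  set Λ2 : ℝ := 2 * (C + 1).toReal with hΛ2
  have hΛ2nn : 0 ≤ Λ2 := by positivity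
  have hlipu : ∀ (k : ℕ) (x y : K),
      |(f (ψ k) x - F x) - (f (ψ k) y - F y)| ≤ Λ2 * dist x y := by
    intro k x y
    have h1 : dist (f (ψ k) x) (f (ψ k) y) ≤ (C + 1).toReal * dist x y :=
      treeNorm_dist_le hR hKR hC1top
        (le_trans (hg (φ1 k)) (add_le_add (le_refl C) (epsSeq_le_one _))) x y
    have h2 : dist (F x) (F y) ≤ (C + 1).toReal * dist x y :=
      treeNorm_dist_le hR hKR hC1top
        (le_trans hFC (le_add_right (le_refl C)) : treeNorm K L F ≤ C + 1) x y
    rw [Real.dist_eq] at h1 h2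
    have h3 : |(f (ψ k) x - F x) - (f (ψ k) y - F y)|
        ≤ |f (ψ k) x - f (ψ k) y| + |F x - F y| := by
      have := abs_sub (f (ψ k) x - f (ψ k) y) (F x - F y)
      calc |(f (ψ k) x - F x) - (f (ψ k) y - F y)|
          = |(f (ψ k) x - f (ψ k) y) - (F x - F y)| := by ring_nf
        _ ≤ |f (ψ k) x - f (ψ k) y| + |F x - F y| := abs_sub _ _
    rw [hΛ2]
    linarith
  set δ : ℕ → ℝ := fun k => dist (f (ψ k)) F with hδdef
  have hδnn : ∀ k, 0 ≤ δ k := fun k => dist_nonneg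
  have hδ0 : Tendsto δ atTop (𝓝 0) := by
    have := tendsto_iff_dist_tendsto_zero.mp hconv
    exact this
  have hptu : ∀ (k : ℕ) (x : K), |f (ψ k) x - F x| ≤ δ k := by
    intro k x
    have := ContinuousMap.dist_apply_le_dist (f := f (ψ k)) (g := F) x
    rwa [Real.dist_eq] at this
  intro α hα
  obtain ⟨hα0, hα1⟩ := hα
  set b : ℕ → ℝ := fun k =>
    δ k + (2 * δ k ^ (1 - α / 2) + Λ2 * δ k ^ ((1 - α) / 2)) with hb
  have hbnn : ∀ k, 0 ≤ b k := by
    intro k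
    have h1 : (0:ℝ) ≤ δ k ^ (1 - α / 2) := Real.rpow_nonneg (hδnn k) _
    have h2 : (0:ℝ) ≤ δ k ^ ((1 - α) / 2) := Real.rpow_nonneg (hδnn k) _
    have := hδnn k
    rw [hb]
    positivity
  have hbound : ∀ k, holderNorm K α (fun x : K => f (ψ k) x - F x) ≤ ENNReal.ofReal (b k) := by
    intro k
    set u : K → ℝ := fun x => f (ψ k) x - F x with hu
    rcases eq_or_lt_of_le (hδnn k) with hδz | hδpos
    · -- δ k = 0 : u ≡ 0
      have hux : ∀ x, u x = 0 := by
        intro x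
        have := hptu k x
        rw [← hδz] at this
        exact abs_eq_zero.mp (le_antisymm this (abs_nonneg _))
      have hz1 : (⨆ x : K, (‖u x‖₊ : ℝ≥0∞)) ≤ 0 := by
        refine iSup_le fun x => ?_
        simp [hux x]
      have hz2 : (⨆ x : K, ⨆ y : K, if x = y then 0
          else (‖u x - u y‖₊ : ℝ≥0∞) / edist x y ^ α) ≤ 0 := by
        refine iSup_le fun x => iSup_le fun y => ?_
        by_cases hxy : x = y
        · simp [hxy]
        · rw [if_neg hxy, hux x, hux y]
          simp
      have hzero : holderNorm K α u ≤ 0 := by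
        rw [holderNorm]
        calc _ ≤ (0:ℝ≥0∞) + 0 := add_le_add hz1 hz2
          _ = 0 := by simp
      exact le_trans hzero zero_le
    · -- δ k > 0
      set t : ℝ := δ k ^ ((1:ℝ) / 2) with ht
      have htpos : 0 < t := Real.rpow_pos_of_pos hδpos _
      have hsup1 : (⨆ x : K, (‖u x‖₊ : ℝ≥0∞)) ≤ ENNReal.ofReal (δ k) := by
        refine iSup_le fun x => ?_
        rw [← enorm_eq_nnnorm, ← ofReal_norm, Real.norm_eq_abs]
        exact ENNReal.ofReal_le_ofReal (hptu k x)
      have hsup2 : (⨆ x : K, ⨆ y : K, if x = y then 0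
          else (‖u x - u y‖₊ : ℝ≥0∞) / edist x y ^ α)
          ≤ ENNReal.ofReal (2 * δ k ^ (1 - α / 2))
            + ENNReal.ofReal (Λ2 * δ k ^ ((1 - α) / 2)) := by
        refine iSup_le fun x => iSup_le fun y => ?_
        by_cases hxy : x = y
        · rw [if_pos hxy]; exact zero_le
        rw [if_neg hxy]
        have he0 : edist x y ≠ 0 := by simpa using hxy
        have het : edist x y ≠ ⊤ := edist_ne_top x y
        rcases le_total (ENNReal.ofReal t) (edist x y) with hcase | hcase
        · -- large distance
          refine le_trans ?_ (le_add_right (le_refl _))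
          have hnum : (‖u x - u y‖₊ : ℝ≥0∞) ≤ ENNReal.ofReal (2 * δ k) := by
            rw [← enorm_eq_nnnorm, ← ofReal_norm, Real.norm_eq_abs]
            refine ENNReal.ofReal_le_ofReal ?_
            have h1 := hptu k x
            have h2 := hptu k y
            have := abs_sub (u x) (u y)
            calc |u x - u y| ≤ |u x| + |u y| := abs_sub _ _
              _ ≤ 2 * δ k := by rw [hu]; simp only []; linarith
          have hden : ENNReal.ofReal t ^ α ≤ edist x y ^ α :=
            ENNReal.rpow_le_rpow hcase hα0.le
          refine le_trans (ENNReal.div_le_div hnum hden) ?_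
          have ht1 : (ENNReal.ofReal t) ^ α = ENNReal.ofReal (t ^ α) :=
            ENNReal.ofReal_rpow_of_pos htpos
          have ht2 : t ^ α = δ k ^ (α / 2) := by
            rw [ht, ← Real.rpow_mul (hδnn k)]
            congr 1
            ring
          have ht3 : 2 * δ k / δ k ^ (α / 2) = 2 * δ k ^ (1 - α / 2) := by
            rw [Real.rpow_sub hδpos, Real.rpow_one]
            ring
          rw [ht1, ht2, ← ENNReal.ofReal_div_of_pos (Real.rpow_pos_of_pos hδpos _), ht3]
        · -- small distance
          refine le_trans ?_ (le_add_left (le_refl _))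
          have hnum : (‖u x - u y‖₊ : ℝ≥0∞) ≤ ENNReal.ofReal Λ2 * edist x y := by
            rw [← enorm_eq_nnnorm, ← ofReal_norm, Real.norm_eq_abs, edist_dist,
              ← ENNReal.ofReal_mul hΛ2nn]
            exact ENNReal.ofReal_le_ofReal (hlipu k x y)
          have h1 : (‖u x - u y‖₊ : ℝ≥0∞) / edist x y ^ α
              ≤ (ENNReal.ofReal Λ2 * edist x y) / edist x y ^ α :=
            ENNReal.div_le_div hnum (le_refl _)
          refine le_trans h1 ?_
          rw [mul_div_assoc]
          have hsplit : edist x y = edist x y ^ ((1:ℝ) - α) * edist x y ^ α := by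
            rw [← ENNReal.rpow_add _ _ he0 het]
            norm_num
          have hαne : edist x y ^ α ≠ 0 := by
            rw [Ne, ENNReal.rpow_eq_zero_iff]
            rintro (⟨h, -⟩ | ⟨h, -⟩)
            · exact he0 h
            · exact het h
          have hαnt : edist x y ^ α ≠ ⊤ := by
            rw [Ne, ENNReal.rpow_eq_top_iff]
            rintro (⟨h, -⟩ | ⟨h, -⟩)
            · exact he0 h
            · exact het h
          rw [show edist x y / edist x y ^ α
              = edist x y ^ ((1:ℝ) - α) * edist x y ^ α / edist x y ^ α from by rw [← hsplit]]
          rw [mul_div_assoc, ENNReal.div_self hαne hαnt, mul_one]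
          have hrp : edist x y ^ ((1:ℝ) - α) ≤ ENNReal.ofReal (δ k ^ ((1 - α) / 2)) := by
            have hmono : edist x y ^ ((1:ℝ) - α) ≤ (ENNReal.ofReal t) ^ ((1:ℝ) - α) :=
              ENNReal.rpow_le_rpow hcase (by linarith)
            refine le_trans hmono ?_
            rw [ENNReal.ofReal_rpow_of_pos htpos]
            refine ENNReal.ofReal_le_ofReal (le_of_eq ?_)
            rw [ht, ← Real.rpow_mul (hδnn k)]
            congr 1
            ring
          calc ENNReal.ofReal Λ2 * edist x y ^ ((1:ℝ) - α)
              ≤ ENNReal.ofReal Λ2 * ENNReal.ofReal (δ k ^ ((1 - α) / 2)) :=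
                mul_le_mul_right hrp _
            _ = ENNReal.ofReal (Λ2 * δ k ^ ((1 - α) / 2)) :=
                (ENNReal.ofReal_mul hΛ2nn).symm
      rw [holderNorm, hb]
      rw [ENNReal.ofReal_add (hδnn k) (by
        have h1 : (0:ℝ) ≤ δ k ^ (1 - α / 2) := Real.rpow_nonneg (hδnn k) _
        have h2 : (0:ℝ) ≤ δ k ^ ((1 - α) / 2) := Real.rpow_nonneg (hδnn k) _
        positivity)]
      rw [ENNReal.ofReal_add (by
          have h1 : (0:ℝ) ≤ δ k ^ (1 - α / 2) := Real.rpow_nonneg (hδnn k) _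
          positivity)
        (by
          have h2 : (0:ℝ) ≤ δ k ^ ((1 - α) / 2) := Real.rpow_nonneg (hδnn k) _
          positivity)]
      exact add_le_add hsup1 hsup2
  -- convergence of the bound
  have hbtend : Tendsto (fun k => ENNReal.ofReal (b k)) atTop (𝓝 0) := by
    have hb0 : Tendsto b atTop (𝓝 0) := by
      have t1 : Tendsto (fun k => δ k ^ (1 - α / 2)) atTop (𝓝 0) := by
        have hcont : ContinuousAt (fun s : ℝ => s ^ (1 - α / 2)) 0 :=
          Real.continuousAt_rpow_const 0 _ (Or.inr (by linarith))
        have := hcont.tendsto.comp hδ0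
        rwa [Real.zero_rpow (ne_of_gt (by linarith : (0:ℝ) < 1 - α / 2))] at this
      have t2 : Tendsto (fun k => δ k ^ ((1 - α) / 2)) atTop (𝓝 0) := by
        have hcont : ContinuousAt (fun s : ℝ => s ^ ((1 - α) / 2)) 0 :=
          Real.continuousAt_rpow_const 0 _ (Or.inr (by linarith))
        have := hcont.tendsto.comp hδ0
        rwa [Real.zero_rpow (ne_of_gt (by linarith : (0:ℝ) < (1 - α) / 2))] at this
      have := (hδ0.add (((t1.const_mul 2)).add (t2.const_mul Λ2)))
      simpa using this
    have := (ENNReal.continuous_ofReal.tendsto 0).comp hb0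
    simpa [Function.comp_def] using this
  refine tendsto_of_tendsto_of_tendsto_of_le_of_le tendsto_const_nhds hbtend
    (fun k => zero_le) hbound

end Final
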